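/- arXiv:2309.15185 — 6 statements merged into one kernel-verified Lean document; each statement's English description precedes it below -/
import Mathlib

section
/- Every simple rank-r matroid with fewer than 2^r − 1 elements has a line containing exactly two points. -/
open Matroid Set

namespace SGK

variable {α : Type*}

/-- The rank of a set `X` in a matroid `M`, as a value in `ℕ∞`. -/
noncomputable def rk (M : Matroid α) (X : Set α) : ℕ∞ :=
  sSup {n : ℕ∞ | ∃ I, M.Indep I ∧ I ⊆ X ∧ I.encard = n}

/-- The rank of a matroid. -/
noncomputable def Rank (M : Matroid α) : ℕ∞ := rk M M.E

/-- A matroid is simple if it has no loops and no parallel pairs,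
equivalently every set of at most two ground elements is independent. -/
def Simple (M : Matroid α) : Prop := ∀ e ∈ M.E, ∀ f ∈ M.E, M.Indep {e, f}

/-- `M` is representable over the field `F`: there is a map from the ground set to a
finite-dimensional `F`-vector space whose linear independence structure matches `M`. -/
def IsRep (F : Type*) [Field F] (M : Matroid α) : Prop :=
  ∃ (n : ℕ) (v : α → (Fin n → F)),
    ∀ I ⊆ M.E, (M.Indep I ↔ LinearIndependent F (I.restrict v))

/-- The points (rank-1 flats) of `M` contained in the set `X`. -/
def points (M : Matroid α) (X : Set α) : Set (Set α) :=
  {P | M.IsFlat P ∧ P ⊆ X ∧ rk M P = 1}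

/-- A line of `M` is a rank-2 flat. -/
def IsLine (M : Matroid α) (L : Set α) : Prop := M.IsFlat L ∧ rk M L = 2

/-- A circuit is a minimal dependent set. -/
def Circuit (M : Matroid α) (C : Set α) : Prop := Minimal M.Dep C

/-- A coloop is an element contained in every base. -/
def Coloop (M : Matroid α) (e : α) : Prop := ∀ B, M.IsBase B → e ∈ B

/-- Contraction of the set `C`, defined by duality: `M ／ C = (M✶ ＼ C)✶`. -/
def con (M : Matroid α) (C : Set α) : Matroid α := (M✶ ↾ (M.E \ C))✶

/-- A matroid is connected if it is nonempty and cannot be written as the direct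
sum of two nonempty matroids. -/
def Connected (M : Matroid α) : Prop :=
  M.E.Nonempty ∧ ¬ ∃ A B : Set α, A ∪ B = M.E ∧ Disjoint A B ∧ A.Nonempty ∧ B.Nonempty ∧
    ∀ I ⊆ M.E, M.Indep (I ∩ A) → M.Indep (I ∩ B) → M.Indep I

/-- `M` is isomorphic to the affine geometry `AG(d, F)` (of rank `d + 1`): its ground
set is in bijection with the affine space `F^d` in a way matching affine independence. -/
def IsAG (F : Type*) [Field F] (d : ℕ) (M : Matroid α) : Prop :=
  ∃ v : α → (Fin d → F),
    (∀ I ⊆ M.E, (M.Indep I ↔ AffineIndependent F (I.restrict v))) ∧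
    Set.InjOn v M.E ∧
    (∀ w : Fin d → F, ∃ e ∈ M.E, v e = w)

/-- `M` is isomorphic to the projective geometry `PG(k-1, F)` (of rank `k`): its ground
set is in bijection with the set of one-dimensional subspaces of `F^k`, matching
linear independence. -/
def IsPG (F : Type*) [Field F] (k : ℕ) (M : Matroid α) : Prop :=
  ∃ v : α → (Fin k → F),
    (∀ I ⊆ M.E, (M.Indep I ↔ LinearIndependent F (I.restrict v))) ∧
    (∀ e ∈ M.E, v e ≠ 0) ∧
    (∀ e ∈ M.E, ∀ f ∈ M.E,
      Submodule.span F {v e} = Submodule.span F {v f} → e = f) ∧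
    (∀ w : Fin k → F, w ≠ 0 → ∃ e ∈ M.E, Submodule.span F {w} = Submodule.span F {v e})

end SGK

namespace MurtyAux

variable {α : Type*} {M : Matroid α} {F F' F1 F2 X L P : Set α} {x y z : α} {I J : Set α}

lemma closure_flat (M : Matroid α) (X : Set α) : M.IsFlat (M.closure X) := by
  rw [Matroid.closure_def, sInter_eq_iInter]
  haveI : Nonempty {F // F ∈ {F | M.IsFlat F ∧ X ∩ M.E ⊆ F}} :=
    ⟨⟨M.E, M.ground_isFlat, inter_subset_right⟩⟩
  exact Matroid.IsFlat.iInter fun F ↦ F.2.1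

lemma rk_basis (hI : M.IsBasis I X) : SGK.rk M X = I.encard := by
  apply le_antisymm
  · apply sSup_le
    rintro n ⟨J, hJ, hJX, rfl⟩
    obtain ⟨J', hJ', hJJ'⟩ := hJ.subset_isBasis_of_subset hJX hI.subset_ground
    exact le_trans (encard_le_encard hJJ') (hJ'.encard_eq_encard hI).le
  · exact le_sSup ⟨I, hI.indep, hI.subset, rfl⟩

lemma rk_lt_of_flat_ssubset (hE : M.E.Finite) (hF : M.IsFlat F) (hF' : M.IsFlat F')
    (hss : F ⊂ F') : SGK.rk M F < SGK.rk M F' := by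
  obtain ⟨I, hI⟩ := M.exists_isBasis F hF.subset_ground
  obtain ⟨J, hJ, hIJ⟩ := hI.indep.subset_isBasis_of_subset (hI.subset.trans hss.subset)
    hF'.subset_ground
  rw [rk_basis hI, rk_basis hJ]
  refine (hE.subset hI.indep.subset_ground).encard_lt_encard ⟨hIJ, fun hJI => ?_⟩
  have h1 : M.closure I = F := by rw [hI.closure_eq_closure, hF.closure]
  have h2 : M.closure J = F' := by rw [hJ.closure_eq_closure, hF'.closure]
  have : I = J := hIJ.antisymm hJI
  rw [this, h2] at h1
  exact hss.ne h1.symm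

lemma flat_eq_of_subset_rk_le (hE : M.E.Finite) (hF : M.IsFlat F) (hF' : M.IsFlat F')
    (hss : F ⊆ F') (hrk : SGK.rk M F' ≤ SGK.rk M F) : F = F' := by
  by_contra hne
  exact absurd hrk (not_le.mpr (rk_lt_of_flat_ssubset hE hF hF' ⟨hss, fun h => hne (hss.antisymm h)⟩))

/-- the set of covers of a flat -/
def covers (M : Matroid α) (F : Set α) : Set (Set α) :=
  {F' | M.IsFlat F' ∧ F ⊆ F' ∧ SGK.rk M F' = SGK.rk M F + 1}

lemma covers_finite (hE : M.E.Finite) (F : Set α) : (covers M F).Finite :=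
  hE.finite_subsets.subset (fun _ hF' => hF'.1.subset_ground)

lemma closure_insert_mem_covers (hF : M.IsFlat F) (hx : x ∈ M.E \ F) :
    M.closure (insert x F) ∈ covers M F ∧ x ∈ M.closure (insert x F) := by
  obtain ⟨I, hI⟩ := M.exists_isBasis F hF.subset_ground
  have hclI : M.closure I = F := by rw [hI.closure_eq_closure, hF.closure]
  have hxI : x ∉ I := fun h => hx.2 (hI.subset h)
  have hind : M.Indep (insert x I) := by
    rw [hI.indep.insert_indep_iff_of_notMem hxI, hclI]
    exact hx
  have hcl : M.closure (insert x F) = M.closure (insert x I) := by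
    rw [← hclI, closure_insert_closure_eq_closure_insert]
  have hxFE : insert x F ⊆ M.E := insert_subset hx.1 hF.subset_ground
  refine ⟨⟨closure_flat M _, ?_, ?_⟩, M.subset_closure _ hxFE (mem_insert x F)⟩
  · exact (subset_insert x F).trans (M.subset_closure _ hxFE)
  · rw [hcl, rk_basis hind.isBasis_closure, rk_basis hI,
      encard_insert_of_notMem hxI]

lemma cover_eq_closure_insert (hE : M.E.Finite) (hF : M.IsFlat F)
    (hF' : F' ∈ covers M F) (hx : x ∈ F' \ F) : F' = M.closure (insert x F) := by
  have hxE : x ∈ M.E := hF'.1.subset_ground hx.1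
  have hmem := closure_insert_mem_covers hF ⟨hxE, hx.2⟩
  have hsub : M.closure (insert x F) ⊆ F' := by
    have : insert x F ⊆ F' := insert_subset hx.1 hF'.2.1
    rw [← hF'.1.closure]
    exact M.closure_subset_closure this
  exact (flat_eq_of_subset_rk_le hE hmem.1.1 hF'.1 hsub
    (by rw [hF'.2.2, hmem.1.2.2])).symm

end MurtyAux

namespace MurtyAux2
open MurtyAux

variable {α : Type*} {M : Matroid α} {F F' F1 F2 X L P : Set α} {x y z : α} {I J : Set α}

lemma cl_singleton (hS : SGK.Simple M) (hx : x ∈ M.E) : M.closure {x} = {x} := by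
  have hxi : M.Indep {x} := by simpa using hS x hx x hx
  apply subset_antisymm
  · intro w hw
    have hwE : w ∈ M.E := M.mem_ground_of_mem_closure hw
    by_contra hwx
    have hwx' : w ∉ ({x} : Set α) := hwx
    rw [hxi.mem_closure_iff_of_notMem hwx'] at hw
    exact hw.not_indep (hS w hwE x hx)
  · exact M.subset_closure {x} (singleton_subset_iff.mpr hx)

lemma cl_empty (hS : SGK.Simple M) : M.closure ∅ = ∅ := by
  apply subset_antisymm _ (empty_subset _)
  intro w hw
  have hwE : w ∈ M.E := M.mem_ground_of_mem_closure hw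
  rw [M.empty_indep.mem_closure_iff_of_notMem (notMem_empty w)] at hw
  exact absurd (by simpa using hS w hwE w hwE) hw.not_indep

lemma rk_empty (M : Matroid α) : SGK.rk M ∅ = 0 := by
  rw [rk_basis M.empty_indep.isBasis_self, encard_empty]

lemma rk_pair_cl (hS : SGK.Simple M) (hx : x ∈ M.E) (hy : y ∈ M.E) (hne : x ≠ y) :
    SGK.rk M (M.closure {x, y}) = 2 := by
  rw [rk_basis (hS x hx y hy).isBasis_closure, encard_pair hne]

lemma points_eq (hS : SGK.Simple M) (hL : L ⊆ M.E) :
    SGK.points M L = (fun x => ({x} : Set α)) '' L := by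
  apply subset_antisymm
  · rintro P ⟨hP, hPL, hrk⟩
    obtain ⟨I, hI⟩ := M.exists_isBasis P hP.subset_ground
    rw [rk_basis hI, encard_eq_one] at hrk
    obtain ⟨a, rfl⟩ := hrk
    have haE : a ∈ M.E := hI.indep.subset_ground rfl
    have hPa : P = {a} := by
      rw [← hP.closure, ← hI.closure_eq_closure, cl_singleton hS haE]
    exact ⟨a, hPL (hPa ▸ rfl), hPa.symm⟩
  · rintro _ ⟨a, haL, rfl⟩
    have haE : a ∈ M.E := hL haL
    have hai : M.Indep {a} := by simpa using hS a haE a haE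
    refine ⟨?_, singleton_subset_iff.mpr haL, ?_⟩
    · show M.IsFlat {a}
      rw [← cl_singleton hS haE]; exact closure_flat M _
    · show SGK.rk M {a} = 1
      rw [rk_basis hai.isBasis_self, encard_singleton]

lemma three_covers (hS : SGK.Simple M) (hE : M.E.Finite)
    (H3 : ∀ x ∈ M.E, ∀ y ∈ M.E, x ≠ y → ∃ z ∈ M.closure {x, y}, z ≠ x ∧ z ≠ y)
    {k : ℕ} (hF : M.IsFlat F) (hkF : SGK.rk M F = (k : ℕ∞)) (hP : M.IsFlat P) (hFP : F ⊆ P)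
    (hrkP : SGK.rk M P = (k : ℕ∞) + 2) (h1 : F1 ∈ covers M F) (h1P : F1 ⊆ P) :
    ∃ F2 F3, F2 ∈ covers M F ∧ F3 ∈ covers M F ∧ F2 ⊆ P ∧ F3 ⊆ P ∧
      F1 ≠ F2 ∧ F1 ≠ F3 ∧ F2 ≠ F3 := by
  have hrkF1 : SGK.rk M F1 = (k : ℕ∞) + 1 := by rw [h1.2.2, hkF]
  -- F1 ≠ P
  have hF1P : F1 ≠ P := by
    intro h
    rw [h, hrkP] at hrkF1
    have : ((k + 2 : ℕ) : ℕ∞) = ((k + 1 : ℕ) : ℕ∞) := by push_cast; exact hrkF1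
    exact absurd (Nat.cast_inj.mp this) (by omega)
  obtain ⟨y, hyP, hyF1⟩ := exists_of_ssubset (h1P.ssubset_of_ne hF1P)
  have hyE : y ∈ M.E := hP.subset_ground hyP
  have hyF : y ∉ F := fun h => hyF1 (h1.2.1 h)
  obtain ⟨h2cov, hyF2⟩ := closure_insert_mem_covers hF ⟨hyE, hyF⟩
  set F2 := M.closure (insert y F) with hF2def
  have h2P : F2 ⊆ P := by
    rw [← hP.closure]
    exact M.closure_subset_closure (insert_subset hyP hFP)
  have h12 : F1 ≠ F2 := fun h => hyF1 (h ▸ hyF2)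
  -- pick x ∈ F1 \ F
  have hFF1 : F ≠ F1 := by
    intro h
    rw [← h, hkF] at hrkF1
    have : ((k : ℕ) : ℕ∞) = ((k + 1 : ℕ) : ℕ∞) := by push_cast; exact hrkF1
    exact absurd (Nat.cast_inj.mp this) (by omega)
  obtain ⟨x, hxF1, hxF⟩ := exists_of_ssubset (h1.2.1.ssubset_of_ne hFF1)
  have hxE : x ∈ M.E := h1.1.subset_ground hxF1
  have hxy : x ≠ y := fun h => hyF1 (h ▸ hxF1)
  obtain ⟨z, hz, hzx, hzy⟩ := H3 x hxE y hyE hxy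
  have hclP : M.closure {x, y} ⊆ P := by
    rw [← hP.closure]
    exact M.closure_subset_closure (pair_subset (h1P hxF1) hyP)
  have hzP : z ∈ P := hclP hz
  have hzE : z ∈ M.E := hP.subset_ground hzP
  have hzF1 : z ∉ F1 := by
    intro hz1
    have hexch : y ∈ M.closure (insert z {x}) := by
      refine (Matroid.closure_exchange (M := M) (X := {x}) ⟨?_, ?_⟩).1
      · rwa [show insert y {x} = ({x, y} : Set α) from pair_comm y x]
      · rw [cl_singleton hS hxE]; simpa using hzx
    have : y ∈ F1 := by
      have hsub : M.closure (insert z {x}) ⊆ F1 := by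
        rw [← h1.1.closure]
        exact M.closure_subset_closure (insert_subset hz1 (singleton_subset_iff.mpr hxF1))
      exact hsub hexch
    exact hyF1 this
  have hzF2 : z ∉ F2 := by
    intro hz2
    have hexch : x ∈ M.closure (insert z {y}) := by
      refine (Matroid.closure_exchange (M := M) (X := {y}) ⟨hz, ?_⟩).1
      rw [cl_singleton hS hyE]; simpa using hzy
    have hxF2 : x ∈ F2 := by
      have hsub : M.closure (insert z {y}) ⊆ F2 := by
        rw [← h2cov.1.closure]
        exact M.closure_subset_closure (insert_subset hz2 (singleton_subset_iff.mpr hyF2))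
      exact hsub hexch
    have e1 : F1 = M.closure (insert x F) := cover_eq_closure_insert hE hF h1 ⟨hxF1, hxF⟩
    have e2 : F2 = M.closure (insert x F) := cover_eq_closure_insert hE hF h2cov ⟨hxF2, hxF⟩
    exact h12 (e1.trans e2.symm)
  have hzF : z ∉ F := fun h => hzF1 (h1.2.1 h)
  obtain ⟨h3cov, hzF3⟩ := closure_insert_mem_covers hF ⟨hzE, hzF⟩
  refine ⟨F2, M.closure (insert z F), h2cov, h3cov, h2P, ?_, h12, ?_, ?_⟩
  · rw [← hP.closure]
    exact M.closure_subset_closure (insert_subset hzP hFP)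
  · exact fun h => hzF1 (h ▸ hzF3)
  · exact fun h => hzF2 (h ▸ hzF3)



lemma covers_card (hS : SGK.Simple M) (hE : M.E.Finite)
    (H3 : ∀ x ∈ M.E, ∀ y ∈ M.E, x ≠ y → ∃ z ∈ M.closure {x, y}, z ≠ x ∧ z ≠ y) :
    ∀ (n k : ℕ) (F : Set α), M.IsFlat F → SGK.rk M F = (k : ℕ∞) →
      SGK.rk M M.E = ((k + n : ℕ) : ℕ∞) → 2 ^ n - 1 ≤ (covers M F).ncard := by
  intro n
  induction n with
  | zero => intro k F _ _ _; simp
  | succ n IH =>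
    intro k F hF hkF hrE
    classical
    -- F ≠ M.E
    have hFE : F ≠ M.E := by
      intro h
      rw [h, hrE] at hkF
      exact absurd (Nat.cast_inj.mp hkF) (by omega)
    obtain ⟨x, hxE, hxF⟩ := exists_of_ssubset (hF.subset_ground.ssubset_of_ne hFE)
    obtain ⟨h1cov, _⟩ := closure_insert_mem_covers hF ⟨hxE, hxF⟩
    set F1 := M.closure (insert x F) with hF1def
    have hrkF1 : SGK.rk M F1 = ((k + 1 : ℕ) : ℕ∞) := by
      rw [h1cov.2.2, hkF]; push_cast; ring
    have hIH : 2 ^ n - 1 ≤ (covers M F1).ncard :=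
      IH (k + 1) F1 h1cov.1 hrkF1 (by rw [hrE]; congr 1; omega)
    -- Finsets
    have hfinF := covers_finite (M := M) hE F
    have hfinF1 := covers_finite (M := M) hE F1
    set s0 := hfinF.toFinset with hs0
    set t := hfinF1.toFinset with ht
    set s := s0.erase F1 with hs
    set f : Set α → Set α := fun F' => M.closure (F1 ∪ F') with hf
    -- maps to, and the stronger fact that f F' = P whenever F' ⊆ P ∈ covers F1
    have key : ∀ F' ∈ s, f F' ∈ covers M F1 ∧ F' ⊆ f F' := by
      intro F' hF's
      rw [hs, Finset.mem_erase, hs0, Set.Finite.mem_toFinset] at hF's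
      obtain ⟨hne, hF'cov⟩ := hF's
      have hFF' : F ≠ F' := by
        intro h
        have h22 := hF'cov.2.2
        rw [← h, hkF] at h22
        have h22' : ((k : ℕ) : ℕ∞) = ((k + 1 : ℕ) : ℕ∞) := by push_cast; exact h22
        exact absurd (Nat.cast_inj.mp h22') (by omega)
      obtain ⟨t0, ht0F', ht0F⟩ := exists_of_ssubset (hF'cov.2.1.ssubset_of_ne hFF')
      have ht0E : t0 ∈ M.E := hF'cov.1.subset_ground ht0F'
      have ht0F1 : t0 ∉ F1 := by
        intro h
        apply hne
        rw [cover_eq_closure_insert hE hF hF'cov ⟨ht0F', ht0F⟩,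
          ← cover_eq_closure_insert hE hF h1cov ⟨h, ht0F⟩]
      have heq : f F' = M.closure (insert t0 F1) := by
        apply subset_antisymm
        · apply Matroid.closure_subset_closure_of_subset_closure
          apply union_subset
          · exact ((subset_insert t0 F1).trans (M.subset_closure _
              (insert_subset ht0E h1cov.1.subset_ground)))
          · rw [cover_eq_closure_insert hE hF hF'cov ⟨ht0F', ht0F⟩]
            exact M.closure_subset_closure (insert_subset_insert h1cov.2.1)
        · exact M.closure_subset_closure (insert_subset (Or.inr ht0F') subset_union_left)
      rw [heq]
      refine ⟨(closure_insert_mem_covers h1cov.1 ⟨ht0E, ht0F1⟩).1, ?_⟩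
      rw [← heq]
      exact subset_union_right.trans (M.subset_closure _
        (union_subset h1cov.1.subset_ground hF'cov.1.subset_ground))
    have keyP : ∀ F' ∈ s, ∀ P ∈ covers M F1, F' ⊆ P → f F' = P := by
      intro F' hF's P hPcov hF'P
      obtain ⟨hfcov, _⟩ := key F' hF's
      have hsub : f F' ⊆ P := by
        rw [← hPcov.1.closure]
        apply M.closure_subset_closure (union_subset hPcov.2.1 hF'P)
      exact flat_eq_of_subset_rk_le hE hfcov.1 hPcov.1 hsub
        (by rw [hfcov.2.2, hPcov.2.2])
    have hmaps : ∀ F' ∈ s, f F' ∈ t := by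
      intro F' hF's
      rw [ht, Set.Finite.mem_toFinset]
      exact (key F' hF's).1
    have hfiber : ∀ P ∈ t, 2 ≤ (s.filter (fun F' => f F' = P)).card := by
      intro P hPt
      rw [ht, Set.Finite.mem_toFinset] at hPt
      have hF1P : F1 ⊆ P := hPt.2.1
      have hrkP : SGK.rk M P = (k : ℕ∞) + 2 := by
        rw [hPt.2.2, hrkF1]; push_cast; ring
      obtain ⟨F2, F3, h2cov, h3cov, h2P, h3P, h12, h13, h23⟩ :=
        three_covers hS hE H3 hF hkF hPt.1 (h1cov.2.1.trans hF1P) hrkP h1cov hF1P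
      have h2s : F2 ∈ s := by
        rw [hs, Finset.mem_erase, hs0, Set.Finite.mem_toFinset]
        exact ⟨Ne.symm h12, h2cov⟩
      have h3s : F3 ∈ s := by
        rw [hs, Finset.mem_erase, hs0, Set.Finite.mem_toFinset]
        exact ⟨Ne.symm h13, h3cov⟩
      have hsub : ({F2, F3} : Finset (Set α)) ⊆ s.filter (fun F' => f F' = P) := by
        intro Q hQ
        rw [Finset.mem_insert, Finset.mem_singleton] at hQ
        rcases hQ with rfl | rfl
        · exact Finset.mem_filter.mpr ⟨h2s, keyP _ h2s P hPt h2P⟩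
        · exact Finset.mem_filter.mpr ⟨h3s, keyP _ h3s P hPt h3P⟩
      calc 2 = ({F2, F3} : Finset (Set α)).card := (Finset.card_pair h23).symm
        _ ≤ _ := Finset.card_le_card hsub
    have hcount : 2 * t.card ≤ s.card :=
      Finset.mul_card_image_le_card_of_maps_to hmaps 2 hfiber
    have hs0card : s.card + 1 = s0.card := by
      apply Finset.card_erase_add_one
      rw [hs0, Set.Finite.mem_toFinset]
      exact h1cov
    have hncard : (covers M F).ncard = s0.card := Set.ncard_eq_toFinset_card _ hfinF
    have hncard1 : (covers M F1).ncard = t.card := Set.ncard_eq_toFinset_card _ hfinF1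
    rw [hncard]
    rw [hncard1] at hIH
    have hpow : 1 ≤ 2 ^ n := Nat.one_le_two_pow
    have hpow2 : 2 ^ (n + 1) = 2 * 2 ^ n := by ring
    omega

end MurtyAux2


/-- Murty's theorem: every simple rank-`r` matroid with fewer than `2^r - 1` elements has a
line containing exactly two points. -/
theorem stmt_4 {α : Type*} (r : ℕ) (M : Matroid α) (hS : SGK.Simple M)
    (hr : SGK.Rank M = (r : ℕ∞))
    (hcard : M.E.encard < ((2 ^ r - 1 : ℕ) : ℕ∞)) :
    ∃ L, SGK.IsLine M L ∧ (SGK.points M L).encard = 2 := by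
  by_contra hcon
  push_neg at hcon
  have hE : M.E.Finite := by
    rw [← Set.encard_lt_top_iff]
    exact lt_trans hcard (WithTop.coe_lt_top _)
  have H3 : ∀ x ∈ M.E, ∀ y ∈ M.E, x ≠ y → ∃ z ∈ M.closure {x, y}, z ≠ x ∧ z ≠ y := by
    intro x hx y hy hne
    have hL : SGK.IsLine M (M.closure {x, y}) :=
      ⟨MurtyAux.closure_flat M {x, y}, MurtyAux2.rk_pair_cl hS hx hy hne⟩
    have hne2 := hcon _ hL
    have hpts : (SGK.points M (M.closure {x, y})).encard = (M.closure {x, y}).encard := by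
      rw [MurtyAux2.points_eq hS (M.closure_subset_ground _)]
      exact Set.singleton_injective.encard_image _
    have hsub : {x, y} ⊆ M.closure {x, y} := M.subset_closure _ (pair_subset hx hy)
    have hnecl : M.closure {x, y} ≠ {x, y} := by
      intro h
      apply hne2
      rw [hpts, h, encard_pair hne]
    obtain ⟨z, hz, hznot⟩ := exists_of_ssubset (hsub.ssubset_of_ne (Ne.symm hnecl))
    exact ⟨z, hz, fun h => hznot (by simp [h]), fun h => hznot (by simp [h])⟩
  have hr' : SGK.rk M M.E = (r : ℕ∞) := hr
  have hflat0 : M.IsFlat (∅ : Set α) := by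
    rw [← MurtyAux2.cl_empty hS]; exact MurtyAux.closure_flat M ∅
  have h0 : SGK.rk M (∅ : Set α) = ((0 : ℕ) : ℕ∞) := by
    rw [MurtyAux2.rk_empty]; simp
  have hcc := MurtyAux2.covers_card hS hE H3 r 0 ∅ hflat0 h0 (by rw [hr']; norm_num)
  have hsub : MurtyAux.covers M ∅ ⊆ (fun x => ({x} : Set α)) '' M.E := by
    intro F' hF'
    have hFne : F' ≠ ∅ := by
      intro h
      have h22 := hF'.2.2
      rw [h, MurtyAux2.rk_empty] at h22
      simp at h22
    obtain ⟨a, ha⟩ := nonempty_iff_ne_empty.mpr hFne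
    have haE : a ∈ M.E := hF'.1.subset_ground ha
    have hFa : F' = {a} := by
      rw [MurtyAux.cover_eq_closure_insert hE hflat0 hF' ⟨ha, notMem_empty a⟩]
      simp only [insert_empty_eq]
      exact MurtyAux2.cl_singleton hS haE
    exact ⟨a, haE, hFa.symm⟩
  have hle : (MurtyAux.covers M ∅).ncard ≤ M.E.ncard := by
    calc (MurtyAux.covers M ∅).ncard ≤ ((fun x => ({x} : Set α)) '' M.E).ncard :=
        Set.ncard_le_ncard hsub (hE.image _)
      _ = M.E.ncard := Set.ncard_image_of_injective _ Set.singleton_injective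
  have hlt : M.E.ncard < 2 ^ r - 1 := by
    have hc := hcard
    rw [← hE.cast_ncard_eq] at hc
    exact_mod_cast hc
  omega
end

section
/- Let p be a prime and let N be a simple GF(p)-representable rank-3 matroid whose ground set is the union of three lines L1, L2, L3 passing through a common point. If N has no two-point line, then each of L1, L2, L3 contains exactly p+1 points. -/
open Matroid Set

open Matroid Set Pointwise

namespace SGKAux

open SGK

variable {α F V : Type*} [Field F] [AddCommGroup V] [Module F V]

lemma li_list (v : α → V) (l : List α) (hl : l.Nodup) :
    LinearIndependent F (({x | x ∈ l} : Set α).restrict v) ↔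
    LinearIndependent F (fun i : Fin l.length => v (l.get i)) := by
  classical
  rw [← linearIndependent_equiv (List.Nodup.getEquiv l hl)]
  rfl

lemma li_pair (v : α → V) {x y : α} (h : x ≠ y) :
    LinearIndependent F (({x, y} : Set α).restrict v) ↔ LinearIndependent F ![v x, v y] := by
  have hs : ({x, y} : Set α) = {u | u ∈ [x, y]} := by ext u; simp
  rw [hs, li_list v [x, y] (by simp [h])]
  constructor <;> intro hli <;> (convert hli using 1 <;> [rfl; (funext i; fin_cases i <;> rfl)])

lemma li_triple (v : α → V) {x y z : α} (hxy : x ≠ y) (hxz : x ≠ z) (hyz : y ≠ z) :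
    LinearIndependent F (({x, y, z} : Set α).restrict v) ↔
      LinearIndependent F ![v x, v y, v z] := by
  have hs : ({x, y, z} : Set α) = {u | u ∈ [x, y, z]} := by ext u; simp
  rw [hs, li_list v [x, y, z] (by simp [hxy, hxz, hyz])]
  constructor <;> intro hli <;> (convert hli using 1 <;> [rfl; (funext i; fin_cases i <;> rfl)])

lemma li_quad (v : α → V) {x y z w : α} (hxy : x ≠ y) (hxz : x ≠ z) (hxw : x ≠ w)
    (hyz : y ≠ z) (hyw : y ≠ w) (hzw : z ≠ w) :
    LinearIndependent F (({x, y, z, w} : Set α).restrict v) ↔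
      LinearIndependent F ![v x, v y, v z, v w] := by
  have hs : ({x, y, z, w} : Set α) = {u | u ∈ [x, y, z, w]} := by ext u; simp
  rw [hs, li_list v [x, y, z, w] (by simp [hxy, hxz, hxw, hyz, hyw, hzw])]
  constructor <;> intro hli <;> (convert hli using 1 <;> [rfl; (funext i; fin_cases i <;> rfl)])

lemma range_pair (a b : V) : Set.range ![a, b] = {a, b} := by
  ext u; simp [Matrix.range_cons, Matrix.range_empty]; tauto

lemma range_triple (a b c : V) : Set.range ![a, b, c] = {a, b, c} := by
  ext u; simp [Matrix.range_cons, Matrix.range_empty]; tauto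

variable {M : Matroid α} {X L I J : Set α} {x y : α}

lemma le_rk (hI : M.Indep I) (hIX : I ⊆ X) : I.encard ≤ rk M X :=
  le_sSup ⟨I, hI, hIX, rfl⟩

lemma rk_le {k : ℕ∞} (h : ∀ I, M.Indep I → I ⊆ X → I.encard ≤ k) : rk M X ≤ k :=
  sSup_le (by rintro n ⟨I, hI, hIX, rfl⟩; exact h I hI hIX)

lemma exists_indep_of_lt_rk {k : ℕ∞} (h : k < rk M X) :
    ∃ I, M.Indep I ∧ I ⊆ X ∧ k < I.encard := by
  obtain ⟨n, ⟨I, hI, hIX, rfl⟩, hn⟩ := lt_sSup_iff.mp h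
  exact ⟨I, hI, hIX, hn⟩

lemma closure_subset_flat {G : Set α} (hF : M.IsFlat G) (hXF : X ⊆ G) : M.closure X ⊆ G :=
  sInter_subset_of_mem ⟨hF, (inter_subset_left).trans hXF⟩

lemma simple_indep_pair (hS : Simple M) (hx : x ∈ M.E) (hy : y ∈ M.E) : M.Indep {x, y} :=
  hS x hx y hy

lemma simple_indep_single (hS : Simple M) (hx : x ∈ M.E) : M.Indep {x} := by
  simpa using hS x hx x hx

lemma closure_flat' (M : Matroid α) (X : Set α) : M.IsFlat (M.closure X) := by
  rw [Matroid.closure_def]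
  have hne : Nonempty {F // M.IsFlat F ∧ X ∩ M.E ⊆ F} :=
    ⟨⟨M.E, M.ground_isFlat, inter_subset_right⟩⟩
  have h := Matroid.IsFlat.iInter
    (Fs := fun F : {F // M.IsFlat F ∧ X ∩ M.E ⊆ F} => F.1) (fun F => F.2.1)
  rwa [sInter_eq_iInter]

lemma line_eq_closure_pair (hS : Simple M) (hL : IsLine M L) (hx : x ∈ L) (hy : y ∈ L)
    (hxy : x ≠ y) : M.closure {x, y} = L := by
  have hLE : L ⊆ M.E := hL.1.subset_ground
  refine subset_antisymm (closure_subset_flat hL.1 (pair_subset hx hy)) fun u hu => ?_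
  by_contra hu'
  have hpair : M.Indep {x, y} := simple_indep_pair hS (hLE hx) (hLE hy)
  have hunx : u ∉ ({x, y} : Set α) := fun h => hu' (M.subset_closure {x, y}
    (pair_subset (hLE hx) (hLE hy)) h)
  have hind : M.Indep (insert u {x, y}) :=
    ((hpair.notMem_closure_iff (hLE hu)).mp hu').1
  have h3 : (insert u {x, y} : Set α).encard = 3 := by
    rw [encard_insert_of_notMem hunx, encard_pair hxy]; rfl
  have := le_rk hind (insert_subset hu (pair_subset hx hy))
  rw [h3, hL.2] at this
  norm_num at this

lemma singleton_flat (hS : Simple M) (hx : x ∈ M.E) : M.IsFlat {x} := by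
  have h : M.closure {x} = {x} := by
    refine subset_antisymm (fun u hu => ?_) (M.subset_closure {x} (singleton_subset_iff.mpr hx))
    have huE : u ∈ M.E := M.closure_subset_ground {x} hu
    rcases ((simple_indep_single hS hx).mem_closure_iff).mp hu with hdep | h
    · exact absurd (by simpa [insert_comm] using simple_indep_pair hS huE hx) hdep.not_indep
    · exact h
  rw [← h]; exact closure_flat' M {x}

lemma rk_singleton (hx : x ∈ M.E) (hS : Simple M) : rk M {x} = 1 := by
  refine le_antisymm (rk_le fun I hI hIx => ?_) ?_
  · simpa using (encard_mono hIx).trans_eq (encard_singleton x)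
  · simpa using le_rk (simple_indep_single hS hx) (subset_refl _)

lemma points_eq {G : Set α} (hS : Simple M) (hFE : G ⊆ M.E) :
    points M G = (fun x => ({x} : Set α)) '' G := by
  ext P
  constructor
  · rintro ⟨hPf, hPF, hP1⟩
    have hPE : P ⊆ M.E := hPf.subset_ground
    obtain ⟨I, hI, hIP, hIpos⟩ := exists_indep_of_lt_rk (X := P) (k := 0) (by rw [hP1]; norm_num)
    obtain ⟨x, hx⟩ := encard_pos.mp hIpos
    refine ⟨x, hPF (hIP hx), ?_⟩
    refine (subset_antisymm (fun y hy => ?_) (singleton_subset_iff.mpr (hIP hx))).symm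
    by_contra hyx
    have : (2 : ℕ∞) ≤ rk M P := by
      have := le_rk (simple_indep_pair hS (hPE (hIP hx)) (hPE hy))
        (pair_subset (hIP hx) hy)
      rwa [encard_pair (Ne.symm hyx)] at this
    rw [hP1] at this; norm_num at this
  · rintro ⟨x, hxF, rfl⟩
    exact ⟨singleton_flat hS (hFE hxF), by simpa, rk_singleton (hFE hxF) hS⟩

lemma encard_points {G : Set α} (hS : Simple M) (hFE : G ⊆ M.E) :
    (points M G).encard = G.encard := by
  rw [points_eq hS hFE]
  exact Set.singleton_injective.encard_image G

lemma rk_closure_indep (hI : M.Indep I) : rk M (M.closure I) = I.encard := by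
  refine le_antisymm (rk_le fun J hJ hJcl => ?_) (le_rk hI (M.subset_closure I))
  by_contra hlt
  push_neg at hlt
  obtain ⟨f, hfJI, hins⟩ := hI.augment hJ hlt
  exact hins.not_dep (hI.insert_dep_iff.mpr ⟨hJcl hfJI.1, hfJI.2⟩)

section Rep

variable {nn : ℕ} {v : α → (Fin nn → F)}

lemma pair_li (hv : ∀ I ⊆ M.E, (M.Indep I ↔ LinearIndependent F (I.restrict v)))
    (hS : Simple M) (hx : x ∈ M.E) (hy : y ∈ M.E) (hxy : x ≠ y) :
    LinearIndependent F ![v x, v y] :=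
  (li_pair v hxy).mp ((hv _ (pair_subset hx hy)).mp (simple_indep_pair hS hx hy))

lemma pair_rel (hv : ∀ I ⊆ M.E, (M.Indep I ↔ LinearIndependent F (I.restrict v)))
    (hS : Simple M) (hx : x ∈ M.E) (hy : y ∈ M.E) (hxy : x ≠ y) {s t : F}
    (h : s • v x + t • v y = 0) : s = 0 ∧ t = 0 := by
  have hli := pair_li hv hS hx hy hxy
  rw [LinearIndependent.pair_iff] at hli
  exact hli s t h

lemma memcl (hv : ∀ I ⊆ M.E, (M.Indep I ↔ LinearIndependent F (I.restrict v)))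
    (hS : Simple M) {z : α} (hx : x ∈ M.E) (hy : y ∈ M.E) (hz : z ∈ M.E) (hxy : x ≠ y) :
    z ∈ M.closure {x, y} ↔ v z ∈ Submodule.span F {v x, v y} := by
  by_cases hzxy : z ∈ ({x, y} : Set α)
  · constructor <;> intro _
    · rcases hzxy with h | h
      · rw [h]; exact Submodule.subset_span (mem_insert _ _)
      · rw [mem_singleton_iff] at h; rw [h]
        exact Submodule.subset_span (mem_insert_of_mem _ rfl)
    · exact M.subset_closure {x, y} (pair_subset hx hy) hzxy
  have hzx : z ≠ x := fun h => hzxy (by simp [h])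
  have hzy : z ≠ y := fun h => hzxy (by simp [h])
  have hpair : M.Indep {x, y} := simple_indep_pair hS hx hy
  have hpli : LinearIndependent F ![v x, v y] := pair_li hv hS hx hy hxy
  have hiff : M.Indep {z, x, y} ↔ LinearIndependent F ![v z, v x, v y] :=
    (hv _ (insert_subset hz (pair_subset hx hy))).trans (li_triple v hzx hzy hxy)
  have hcons : LinearIndependent F ![v z, v x, v y] ↔
      LinearIndependent F ![v x, v y] ∧ v z ∉ Submodule.span F (Set.range ![v x, v y]) := by
    rw [show ![v z, v x, v y] = Fin.cons (v z) ![v x, v y] from rfl, linearIndependent_fin_cons]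
  rw [hpair.mem_closure_iff]
  constructor
  · rintro (hdep | hmem)
    · by_contra hns
      exact hdep.not_indep (hiff.mpr (hcons.mpr ⟨hpli, by rwa [range_pair]⟩))
    · exact absurd hmem hzxy
  · intro hspan
    left
    rw [Matroid.dep_iff]
    refine ⟨fun hind => ?_, insert_subset hz (pair_subset hx hy)⟩
    exact ((hcons.mp (hiff.mp hind)).2) (by rwa [range_pair])

end Rep

end SGKAux

/-- For a prime `p`, if a simple rank-3 `GF(p)`-representable matroid is the union of three
copunctual lines and has no two-point line, then each line has exactly `p + 1` points. -/
theorem stmt_6 {α : Type*} (p : ℕ) [Fact p.Prime] (M : Matroid α)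
    (hS : SGK.Simple M) (hR : SGK.IsRep (ZMod p) M) (hr : SGK.Rank M = 3)
    (L1 L2 L3 : Set α)
    (h1 : SGK.IsLine M L1) (h2 : SGK.IsLine M L2) (h3 : SGK.IsLine M L3)
    (e : α) (h12 : L1 ∩ L2 = {e}) (h13 : L1 ∩ L3 = {e}) (h23 : L2 ∩ L3 = {e})
    (hcover : L1 ∪ L2 ∪ L3 = M.E)
    (hno2 : ¬ ∃ L, SGK.IsLine M L ∧ (SGK.points M L).encard = 2) :
    (SGK.points M L1).encard = ((p + 1 : ℕ) : ℕ∞) ∧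
    (SGK.points M L2).encard = ((p + 1 : ℕ) : ℕ∞) ∧
    (SGK.points M L3).encard = ((p + 1 : ℕ) : ℕ∞) := by
  classical
  obtain ⟨n, v, hv⟩ := hR
  have hp : p.Prime := Fact.out
  haveI : NeZero p := ⟨hp.ne_zero⟩
  -- basic memberships
  have hE1 : L1 ⊆ M.E := h1.1.subset_ground
  have hE2 : L2 ⊆ M.E := h2.1.subset_ground
  have hE3 : L3 ⊆ M.E := h3.1.subset_ground
  have he12 : e ∈ L1 ∩ L2 := by rw [h12]; exact rfl
  have he23 : e ∈ L2 ∩ L3 := by rw [h23]; exact rfl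
  have he1 : e ∈ L1 := he12.1
  have he2 : e ∈ L2 := he12.2
  have he3 : e ∈ L3 := he23.2
  have heE : e ∈ M.E := hE1 he1
  have hmem12 : ∀ x, x ∈ L1 → x ∈ L2 → x = e := by
    intro x h h'
    have : x ∈ L1 ∩ L2 := ⟨h, h'⟩
    rwa [h12, mem_singleton_iff] at this
  have hmem13 : ∀ x, x ∈ L1 → x ∈ L3 → x = e := by
    intro x h h'
    have : x ∈ L1 ∩ L3 := ⟨h, h'⟩
    rwa [h13, mem_singleton_iff] at this
  have hmem23 : ∀ x, x ∈ L2 → x ∈ L3 → x = e := by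
    intro x h h'
    have : x ∈ L2 ∩ L3 := ⟨h, h'⟩
    rwa [h23, mem_singleton_iff] at this
  -- pick a point different from e on each line
  have hpick : ∀ L, SGK.IsLine M L → ∃ x ∈ L, x ≠ e := by
    intro L hL
    have h2r : (1 : ℕ∞) < SGK.rk M L := by rw [hL.2]; norm_num
    obtain ⟨I, hI, hIL, hIcard⟩ := SGKAux.exists_indep_of_lt_rk h2r
    obtain ⟨x, hxI, hxe⟩ := Set.exists_ne_of_one_lt_encard hIcard e
    exact ⟨x, hIL hxI, hxe⟩
  obtain ⟨a, haL, hae⟩ := hpick L1 h1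
  obtain ⟨b, hbL, hbe⟩ := hpick L2 h2
  obtain ⟨z0, hz0L, hz0e⟩ := hpick L3 h3
  have haE : a ∈ M.E := hE1 haL
  have hbE : b ∈ M.E := hE2 hbL
  have hz0E : z0 ∈ M.E := hE3 hz0L
  have hab : a ≠ b := fun h => hae (hmem12 a haL (h ▸ hbL))
  have hcl1 : M.closure {e, a} = L1 := SGKAux.line_eq_closure_pair hS h1 he1 haL (Ne.symm hae)
  have hcl2 : M.closure {e, b} = L2 := SGKAux.line_eq_closure_pair hS h2 he2 hbL (Ne.symm hbe)
  have hcl3 : M.closure {e, z0} = L3 := SGKAux.line_eq_closure_pair hS h3 he3 hz0L (Ne.symm hz0e)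
  -- {e, a, b} independent, hence linearly independent vectors
  have heaI : M.Indep {e, a} := SGKAux.simple_indep_pair hS heE haE
  have hbncl : b ∉ M.closure {e, a} := by
    rw [hcl1]; exact fun h => hbe (hmem12 b h hbL)
  have heabI : M.Indep {e, a, b} := by
    have h' : M.Indep (insert b {e, a}) := ((heaI.notMem_closure_iff hbE).mp hbncl).1
    have hset : (insert b {e, a} : Set α) = {e, a, b} := by ext u; simp; tauto
    rwa [hset] at h'
  have heabE : ({e, a, b} : Set α) ⊆ M.E := insert_subset heE (pair_subset haE hbE)
  have hLI : LinearIndependent (ZMod p) ![v e, v a, v b] :=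
    (SGKAux.li_triple v (Ne.symm hae) (Ne.symm hbe) hab).mp ((hv _ heabE).mp heabI)
  have huniq : ∀ s t u : ZMod p, s • v e + t • v a + u • v b = 0 → s = 0 ∧ t = 0 ∧ u = 0 := by
    intro s t u h
    have h2 := Fintype.linearIndependent_iff.mp hLI ![s, t, u]
      (by rw [Fin.sum_univ_three]; simpa using h)
    exact ⟨h2 0, h2 1, h2 2⟩
  -- every vector lies in the span of v e, v a, v b
  have hrkE : SGK.rk M M.E = 3 := hr
  have hW : ∀ x ∈ M.E, v x ∈ Submodule.span (ZMod p) {v e, v a, v b} := by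
    intro x hx
    by_contra hx'
    have hnm : x ∉ ({e, a, b} : Set α) := by
      intro h
      refine hx' (Submodule.subset_span ?_)
      rcases h with h | h | h
      · rw [h]; exact mem_insert _ _
      · rw [h]; exact mem_insert_of_mem _ (mem_insert _ _)
      · rw [mem_singleton_iff] at h; rw [h]
        exact mem_insert_of_mem _ (mem_insert_of_mem _ rfl)
    have hxe : x ≠ e := fun h => hnm (by rw [h]; exact mem_insert _ _)
    have hxa : x ≠ a := fun h => hnm (by rw [h]; exact mem_insert_of_mem _ (mem_insert _ _))
    have hxb : x ≠ b := fun h => hnm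
      (by rw [h]; exact mem_insert_of_mem _ (mem_insert_of_mem _ rfl))
    have hLI4 : LinearIndependent (ZMod p) ![v x, v e, v a, v b] := by
      rw [show ![v x, v e, v a, v b] = Fin.cons (v x) ![v e, v a, v b] from rfl,
        linearIndependent_fin_cons]
      exact ⟨hLI, by rwa [SGKAux.range_triple]⟩
    have hsubE : ({x, e, a, b} : Set α) ⊆ M.E := insert_subset hx heabE
    have hind : M.Indep {x, e, a, b} := (hv _ hsubE).mpr
      ((SGKAux.li_quad v hxe hxa hxb (Ne.symm hae) (Ne.symm hbe) hab).mpr hLI4)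
    have hrk := SGKAux.le_rk hind hsubE
    have h4 : ({x, e, a, b} : Set α).encard = 4 := by
      rw [encard_insert_of_notMem hnm, encard_insert_of_notMem, encard_pair hab]
      · rfl
      · intro h; rcases h with h | h
        · exact hae h.symm
        · exact hbe (mem_singleton_iff.mp h).symm
    rw [h4, hrkE] at hrk
    norm_num at hrk
  -- coordinates
  have hrep : ∀ x : α, ∃ d : Fin 3 → ZMod p,
      x ∈ M.E → v x = d 0 • v e + d 1 • v a + d 2 • v b := by
    intro x
    by_cases hx : x ∈ M.E
    · have hsp := hW x hx
      rw [show ({v e, v a, v b} : Set (Fin n → ZMod p)) = insert (v e) {v a, v b} from rfl,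
        Submodule.mem_span_insert] at hsp
      obtain ⟨s, z, hz, hxz⟩ := hsp
      obtain ⟨t, u, htu⟩ := Submodule.mem_span_pair.mp hz
      refine ⟨![s, t, u], fun _ => ?_⟩
      rw [hxz, ← htu]
      simp [add_assoc]
    · exact ⟨0, fun h => absurd h hx⟩
  choose c hc using hrep
  have hcoord : ∀ x ∈ M.E, ∀ s t u : ZMod p,
      v x = s • v e + t • v a + u • v b → c x 0 = s ∧ c x 1 = t ∧ c x 2 = u := by
    intro x hx s t u h
    have h2 : c x 0 • v e + c x 1 • v a + c x 2 • v b = s • v e + t • v a + u • v b :=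
      (hc x hx).symm.trans h
    have h0 : (c x 0 - s) • v e + (c x 1 - t) • v a + (c x 2 - u) • v b = 0 := by
      rw [sub_smul, sub_smul, sub_smul, show
        c x 0 • v e - s • v e + (c x 1 • v a - t • v a) + (c x 2 • v b - u • v b)
          = (c x 0 • v e + c x 1 • v a + c x 2 • v b) - (s • v e + t • v a + u • v b) from by abel,
        h2, sub_self]
    obtain ⟨q0, q1, q2⟩ := huniq _ _ _ h0
    exact ⟨sub_eq_zero.mp q0, sub_eq_zero.mp q1, sub_eq_zero.mp q2⟩
  have hce : c e 0 = 1 ∧ c e 1 = 0 ∧ c e 2 = 0 := by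
    refine hcoord e heE 1 0 0 ?_
    simp
  -- pair relation helper
  have hpr : ∀ x y : α, x ∈ M.E → y ∈ M.E → x ≠ y → ∀ s t : ZMod p,
      s • v x + t • v y = 0 → s = 0 ∧ t = 0 :=
    fun x y hx hy hxy s t h => SGKAux.pair_rel hv hS hx hy hxy h
  -- a nonzero vector relation forces equality of matroid elements
  have hnontriv : ∀ x y : α, x ∈ M.E → y ∈ M.E → ∀ s : ZMod p,
      v x = s • v y → x = y := by
    intro x y hx hy s hxy
    by_contra hne
    have h0 : (1 : ZMod p) • v x + (-s) • v y = 0 := by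
      rw [hxy]; rw [one_smul, neg_smul]; abel
    exact one_ne_zero (hpr x y hx hy hne 1 (-s) h0).1
  -- membership characterizations
  have hmemL1 : ∀ x ∈ M.E, (x ∈ L1 ↔ v x ∈ Submodule.span (ZMod p) {v e, v a}) := by
    intro x hx
    rw [← hcl1]
    exact SGKAux.memcl hv hS heE haE hx (Ne.symm hae)
  have hmemL2 : ∀ x ∈ M.E, (x ∈ L2 ↔ v x ∈ Submodule.span (ZMod p) {v e, v b}) := by
    intro x hx
    rw [← hcl2]
    exact SGKAux.memcl hv hS heE hbE hx (Ne.symm hbe)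
  have hmemL3 : ∀ x ∈ M.E, (x ∈ L3 ↔ v x ∈ Submodule.span (ZMod p) {v e, v z0}) := by
    intro x hx
    rw [← hcl3]
    exact SGKAux.memcl hv hS heE hz0E hx (Ne.symm hz0e)
  -- coordinates of points on L1
  have hco1 : ∀ x, x ∈ L1 → x ≠ e → (c x 2 = 0 ∧ c x 1 ≠ 0) := by
    intro x hxL hxe
    have hxE := hE1 hxL
    obtain ⟨s, t, hst⟩ := Submodule.mem_span_pair.mp ((hmemL1 x hxE).mp hxL)
    have hrepr : v x = s • v e + t • v a + (0 : ZMod p) • v b := by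
      rw [← hst]; simp
    obtain ⟨q0, q1, q2⟩ := hcoord x hxE s t 0 hrepr
    refine ⟨q2, fun ht => ?_⟩
    rw [ht] at q1
    have : v x = s • v e := by rw [hrepr, ← q1]; simp
    exact hxe (hnontriv x e hxE heE s this)
  have hco2 : ∀ x, x ∈ L2 → x ≠ e → (c x 1 = 0 ∧ c x 2 ≠ 0) := by
    intro x hxL hxe
    have hxE := hE2 hxL
    obtain ⟨s, t, hst⟩ := Submodule.mem_span_pair.mp ((hmemL2 x hxE).mp hxL)
    have hrepr : v x = s • v e + (0 : ZMod p) • v a + t • v b := by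
      rw [← hst]; simp
    obtain ⟨q0, q1, q2⟩ := hcoord x hxE s 0 t hrepr
    refine ⟨q1, fun ht => ?_⟩
    rw [ht] at q2
    have : v x = s • v e := by rw [hrepr, ← q2]; simp
    exact hxe (hnontriv x e hxE heE s this)
  -- the direction of L3
  have hδ : c z0 1 ≠ 0 := by
    intro h
    have : v z0 ∈ Submodule.span (ZMod p) {v e, v b} := by
      refine Submodule.mem_span_pair.mpr ⟨c z0 0, c z0 2, ?_⟩
      rw [hc z0 hz0E, h]; simp
    exact hz0e (hmem23 z0 ((hmemL2 z0 hz0E).mpr this) hz0L)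
  have hε : c z0 2 ≠ 0 := by
    intro h
    have : v z0 ∈ Submodule.span (ZMod p) {v e, v a} := by
      refine Submodule.mem_span_pair.mpr ⟨c z0 0, c z0 1, ?_⟩
      rw [hc z0 hz0E, h]; simp
    exact hz0e (hmem13 z0 ((hmemL1 z0 hz0E).mpr this) hz0L)
  have hco3 : ∀ z, z ∈ L3 → z ≠ e → (c z0 2 * c z 1 = c z0 1 * c z 2 ∧ c z 1 ≠ 0) := by
    intro z hzL hze
    have hzE := hE3 hzL
    obtain ⟨s, t, hst⟩ := Submodule.mem_span_pair.mp ((hmemL3 z hzE).mp hzL)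
    have hrepr : v z = (s + t * c z0 0) • v e + (t * c z0 1) • v a + (t * c z0 2) • v b := by
      rw [← hst, hc z0 hz0E]
      match_scalars <;> ring
    obtain ⟨q0, q1, q2⟩ := hcoord z hzE _ _ _ hrepr
    constructor
    · rw [q1, q2]; ring
    · rw [q1]
      intro h
      have ht : t = 0 := by
        rcases mul_eq_zero.mp h with h' | h'
        · exact h'
        · exact absurd h' hδ
      have : v z = s • v e := by rw [hrepr, ht]; simp
      exact hze (hnontriv z e hzE heE s this)
  -- slope functions
  set δ := c z0 1 with hδdef
  set ε := c z0 2 with hεdef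
  set fA : α → ZMod p := fun x => δ * (c x 0 / c x 1) with hfA
  set fB : α → ZMod p := fun y => ε * (c y 0 / c y 2) with hfB
  set SA := fA '' (L1 \ {e}) with hSA
  set SB := fB '' (L2 \ {e}) with hSB
  set SC := fA '' (L3 \ {e}) with hSC
  -- injectivity of the slope maps
  have hinjA : Set.InjOn fA (L1 \ {e}) := by
    rintro x hxm x' hxm' hEq
    obtain ⟨hx, hxe'⟩ := hxm
    obtain ⟨hx', hxe''⟩ := hxm'
    have hxe : x ≠ e := by simpa using hxe'
    have hx'e : x' ≠ e := by simpa using hxe''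
    by_contra hne
    obtain ⟨hx2, hx1⟩ := hco1 x hx hxe
    obtain ⟨hx'2, hx'1⟩ := hco1 x' hx' hx'e
    simp only [hfA] at hEq
    have h' := mul_left_cancel₀ hδ hEq
    rw [div_eq_div_iff hx1 hx'1] at h'
    have hrel : (c x' 1) • v x + (-(c x 1)) • v x' = 0 := by
      rw [hc x (hE1 hx), hc x' (hE1 hx'), hx2, hx'2]
      match_scalars
      · linear_combination h'
      · ring
      · ring
    exact hx'1 (hpr x x' (hE1 hx) (hE1 hx') hne _ _ hrel).1
  have hinjB : Set.InjOn fB (L2 \ {e}) := by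
    rintro x hxm x' hxm' hEq
    obtain ⟨hx, hxe'⟩ := hxm
    obtain ⟨hx', hxe''⟩ := hxm'
    have hxe : x ≠ e := by simpa using hxe'
    have hx'e : x' ≠ e := by simpa using hxe''
    by_contra hne
    obtain ⟨hx1, hx2⟩ := hco2 x hx hxe
    obtain ⟨hx'1, hx'2⟩ := hco2 x' hx' hx'e
    simp only [hfB] at hEq
    have h' := mul_left_cancel₀ hε hEq
    rw [div_eq_div_iff hx2 hx'2] at h'
    have hrel : (c x' 2) • v x + (-(c x 2)) • v x' = 0 := by
      rw [hc x (hE2 hx), hc x' (hE2 hx'), hx1, hx'1]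
      match_scalars
      · linear_combination h'
      · ring
      · ring
    exact hx'2 (hpr x x' (hE2 hx) (hE2 hx') hne _ _ hrel).1
  have hz2ne : ∀ z, z ∈ L3 → z ≠ e → c z 2 ≠ 0 := by
    intro z hz hze h
    obtain ⟨h3, h1⟩ := hco3 z hz hze
    rw [h, mul_zero] at h3
    rcases mul_eq_zero.mp h3 with h' | h'
    · exact hε h'
    · exact h1 h'
  have hinjC : Set.InjOn fA (L3 \ {e}) := by
    rintro x hxm x' hxm' hEq
    obtain ⟨hx, hxe'⟩ := hxm
    obtain ⟨hx', hxe''⟩ := hxm'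
    have hxe : x ≠ e := by simpa using hxe'
    have hx'e : x' ≠ e := by simpa using hxe''
    by_contra hne
    obtain ⟨hx3, hx1⟩ := hco3 x hx hxe
    obtain ⟨hx'3, hx'1⟩ := hco3 x' hx' hx'e
    simp only [hfA] at hEq
    have h' := mul_left_cancel₀ hδ hEq
    rw [div_eq_div_iff hx1 hx'1] at h'
    have hbb : c x' 1 * c x 2 = c x 1 * c x' 2 := by
      apply mul_left_cancel₀ hδ
      linear_combination (-(c x' 1)) * hx3 + (c x 1) * hx'3
    have hrel : (c x' 1) • v x + (-(c x 1)) • v x' = 0 := by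
      rw [hc x (hE3 hx), hc x' (hE3 hx')]
      match_scalars
      · linear_combination h'
      · ring
      · linear_combination hbb
    exact hx'1 (hpr x x' (hE3 hx) (hE3 hx') hne _ _ hrel).1
  -- third point on a line through two given points
  have hthird : ∀ x y : α, x ∈ M.E → y ∈ M.E → x ≠ y → e ∉ M.closure {x, y} →
      ∃ z, z ∈ M.E ∧ z ∈ M.closure {x, y} ∧ z ≠ x ∧ z ≠ y ∧ z ≠ e ∧
        ∃ lam mu : ZMod p, lam ≠ 0 ∧ mu ≠ 0 ∧ v z = lam • v x + mu • v y := by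
    intro x y hx hy hxy hecl
    have hpair := SGKAux.simple_indep_pair hS hx hy
    have hflat := SGKAux.closure_flat' M {x, y}
    have hrk2 : SGK.rk M (M.closure {x, y}) = 2 := by
      rw [SGKAux.rk_closure_indep hpair, encard_pair hxy]
    have hclE : M.closure {x, y} ⊆ M.E := M.closure_subset_ground _
    have hne2 : (M.closure {x, y}).encard ≠ 2 := by
      intro h
      exact hno2 ⟨_, ⟨hflat, hrk2⟩, by rw [SGKAux.encard_points hS hclE, h]⟩
    have hsub : ({x, y} : Set α) ⊆ M.closure {x, y} := M.subset_closure _ (pair_subset hx hy)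
    have hge : 2 ≤ (M.closure {x, y}).encard := by
      have h' := encard_mono hsub
      rwa [encard_pair hxy] at h'
    have hnsub : ¬(M.closure {x, y} ⊆ {x, y}) := by
      intro h
      exact hne2 (le_antisymm (by simpa [encard_pair hxy] using encard_mono h) hge)
    obtain ⟨z, hzcl, hzxy⟩ := not_subset.mp hnsub
    have hzx : z ≠ x := fun h => hzxy (by rw [h]; exact mem_insert _ _)
    have hzy : z ≠ y := fun h => hzxy (by rw [h]; exact mem_insert_of_mem _ rfl)
    have hze : z ≠ e := fun h => hecl (h ▸ hzcl)
    have hzE := hclE hzcl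
    obtain ⟨lam, mu, hlm⟩ := Submodule.mem_span_pair.mp
      ((SGKAux.memcl hv hS hx hy hzE hxy).mp hzcl)
    have hlam : lam ≠ 0 := by
      intro h
      rw [h, zero_smul, zero_add] at hlm
      exact hzy (hnontriv z y hzE hy mu hlm.symm)
    have hmu : mu ≠ 0 := by
      intro h
      rw [h, zero_smul, add_zero] at hlm
      exact hzx (hnontriv z x hzE hx lam hlm.symm)
    exact ⟨z, hzE, hzcl, hzx, hzy, hze, lam, mu, hlam, hmu, hlm.symm⟩
  -- e is not in the closure of cross pairs
  have hecl1 : ∀ x y, x ∈ L1 → x ≠ e → y ∈ L2 → y ≠ e → e ∉ M.closure {x, y} := by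
    intro x y hx hxe hy hye hecl
    have hxE := hE1 hx
    have hyE := hE2 hy
    have hxy : x ≠ y := fun h => hxe (hmem12 x hx (h ▸ hy))
    obtain ⟨s, t, hst⟩ := Submodule.mem_span_pair.mp
      ((SGKAux.memcl hv hS hxE hyE heE hxy).mp hecl)
    obtain ⟨hx2, hx1⟩ := hco1 x hx hxe
    obtain ⟨hy1, hy2⟩ := hco2 y hy hye
    have hrepr : v e = (s * c x 0 + t * c y 0) • v e + (s * c x 1) • v a + (t * c y 2) • v b := by
      conv_lhs => rw [← hst]
      rw [hc x hxE, hc y hyE, hx2, hy1]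
      match_scalars <;> ring
    obtain ⟨q0, q1, q2⟩ := hcoord e heE _ _ _ hrepr
    have hs : s = 0 := by
      have h0 : s * c x 1 = 0 := by rw [← q1, hce.2.1]
      rcases mul_eq_zero.mp h0 with h | h
      · exact h
      · exact absurd h hx1
    have ht : t = 0 := by
      have h0 : t * c y 2 = 0 := by rw [← q2, hce.2.2]
      rcases mul_eq_zero.mp h0 with h | h
      · exact h
      · exact absurd h hy2
    refine one_ne_zero (α := ZMod p) ?_
    rw [← hce.1, q0, hs, ht]; ring
  have hecl2 : ∀ x z, x ∈ L1 → x ≠ e → z ∈ L3 → z ≠ e → e ∉ M.closure {x, z} := by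
    intro x z hx hxe hz hze hecl
    have hxE := hE1 hx
    have hzE := hE3 hz
    have hxz : x ≠ z := fun h => hxe (hmem13 x hx (h ▸ hz))
    obtain ⟨s, t, hst⟩ := Submodule.mem_span_pair.mp
      ((SGKAux.memcl hv hS hxE hzE heE hxz).mp hecl)
    obtain ⟨hx2, hx1⟩ := hco1 x hx hxe
    obtain ⟨hz3, hz1⟩ := hco3 z hz hze
    have hz2 := hz2ne z hz hze
    have hrepr : v e = (s * c x 0 + t * c z 0) • v e + (s * c x 1 + t * c z 1) • v a
        + (t * c z 2) • v b := by
      conv_lhs => rw [← hst]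
      rw [hc x hxE, hc z hzE, hx2]
      match_scalars <;> ring
    obtain ⟨q0, q1, q2⟩ := hcoord e heE _ _ _ hrepr
    have ht : t = 0 := by
      have h0 : t * c z 2 = 0 := by rw [← q2, hce.2.2]
      rcases mul_eq_zero.mp h0 with h | h
      · exact h
      · exact absurd h hz2
    have hs : s = 0 := by
      have h0 : s * c x 1 + t * c z 1 = 0 := by rw [← q1, hce.2.1]
      rw [ht, zero_mul, add_zero] at h0
      rcases mul_eq_zero.mp h0 with h | h
      · exact h
      · exact absurd h hx1
    refine one_ne_zero (α := ZMod p) ?_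
    rw [← hce.1, q0, hs, ht]; ring
  have hecl3 : ∀ y z, y ∈ L2 → y ≠ e → z ∈ L3 → z ≠ e → e ∉ M.closure {y, z} := by
    intro y z hy hye hz hze hecl
    have hyE := hE2 hy
    have hzE := hE3 hz
    have hyz : y ≠ z := fun h => hye (hmem23 y hy (h ▸ hz))
    obtain ⟨s, t, hst⟩ := Submodule.mem_span_pair.mp
      ((SGKAux.memcl hv hS hyE hzE heE hyz).mp hecl)
    obtain ⟨hy1, hy2⟩ := hco2 y hy hye
    obtain ⟨hz3, hz1⟩ := hco3 z hz hze
    have hrepr : v e = (s * c y 0 + t * c z 0) • v e + (t * c z 1) • v a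
        + (s * c y 2 + t * c z 2) • v b := by
      conv_lhs => rw [← hst]
      rw [hc y hyE, hc z hzE, hy1]
      match_scalars <;> ring
    obtain ⟨q0, q1, q2⟩ := hcoord e heE _ _ _ hrepr
    have ht : t = 0 := by
      have h0 : t * c z 1 = 0 := by rw [← q1, hce.2.1]
      rcases mul_eq_zero.mp h0 with h | h
      · exact h
      · exact absurd h hz1
    have hs : s = 0 := by
      have h0 : s * c y 2 + t * c z 2 = 0 := by rw [← q2, hce.2.2]
      rw [ht, zero_mul, add_zero] at h0
      rcases mul_eq_zero.mp h0 with h | h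
      · exact h
      · exact absurd h hy2
    refine one_ne_zero (α := ZMod p) ?_
    rw [← hce.1, q0, hs, ht]; ring
  -- classification of third points and sum relations
  have hclsub : ∀ x y z : α, x ∈ M.E → y ∈ M.E → z ∈ M.closure {x, y} →
      M.closure {x, z} ⊆ M.closure {x, y} := by
    intro x y z hx hy hz
    exact SGKAux.closure_subset_flat (SGKAux.closure_flat' M {x, y})
      (pair_subset (M.subset_closure _ (pair_subset hx hy) (mem_insert _ _)) hz)
  have hclsub' : ∀ x y z : α, x ∈ M.E → y ∈ M.E → z ∈ M.closure {x, y} →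
      M.closure {y, z} ⊆ M.closure {x, y} := by
    intro x y z hx hy hz
    exact SGKAux.closure_subset_flat (SGKAux.closure_flat' M {x, y})
      (pair_subset (M.subset_closure _ (pair_subset hx hy)
        (mem_insert_of_mem _ rfl)) hz)
  have hsum1 : ∀ s ∈ SA, ∀ t ∈ SB, s + t ∈ SC := by
    rintro s ⟨x, hxm, rfl⟩ t ⟨y, hym, rfl⟩
    obtain ⟨hx, hxe'⟩ := hxm
    obtain ⟨hy, hye'⟩ := hym
    have hxe : x ≠ e := by simpa using hxe'
    have hye : y ≠ e := by simpa using hye'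
    have hxE := hE1 hx
    have hyE := hE2 hy
    have hxy : x ≠ y := fun h => hxe (hmem12 x hx (h ▸ hy))
    have hecl := hecl1 x y hx hxe hy hye
    obtain ⟨z, hzE, hzcl, hzx, hzy, hze, lam, mu, hlam, hmu, hvz⟩ :=
      hthird x y hxE hyE hxy hecl
    have hzL3 : z ∈ L3 := by
      have hzU : z ∈ L1 ∪ L2 ∪ L3 := by rw [hcover]; exact hzE
      rcases hzU with (hz1 | hz2) | hz3
      · exact absurd (hclsub x y z hxE hyE hzcl (by
          rw [SGKAux.line_eq_closure_pair hS h1 hx hz1 (Ne.symm hzx)]; exact he1)) hecl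
      · exact absurd (hclsub' x y z hxE hyE hzcl (by
          rw [SGKAux.line_eq_closure_pair hS h2 hy hz2 (Ne.symm hzy)]; exact he2)) hecl
      · exact hz3
    obtain ⟨hx2, hx1⟩ := hco1 x hx hxe
    obtain ⟨hy1, hy2⟩ := hco2 y hy hye
    obtain ⟨hz3, hz1⟩ := hco3 z hzL3 hze
    have hrepr : v z = (lam * c x 0 + mu * c y 0) • v e + (lam * c x 1) • v a
        + (mu * c y 2) • v b := by
      rw [hvz, hc x hxE, hc y hyE, hx2, hy1]
      match_scalars <;> ring
    obtain ⟨q0, q1, q2⟩ := hcoord z hzE _ _ _ hrepr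
    refine ⟨z, ⟨hzL3, by simpa using hze⟩, ?_⟩
    have hkey : ε * (lam * c x 1) = δ * (mu * c y 2) := by rw [← q1, ← q2]; exact hz3
    show δ * (c z 0 / c z 1) = δ * (c x 0 / c x 1) + ε * (c y 0 / c y 2)
    rw [q0, q1]
    field_simp
    linear_combination (-(c y 0)) * hkey
  have hsum2 : ∀ s ∈ SA, ∀ u ∈ SC, u - s ∈ SB := by
    rintro s ⟨x, hxm, rfl⟩ u ⟨z, hzm, rfl⟩
    obtain ⟨hx, hxe'⟩ := hxm
    obtain ⟨hz, hze'⟩ := hzm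
    have hxe : x ≠ e := by simpa using hxe'
    have hze : z ≠ e := by simpa using hze'
    have hxE := hE1 hx
    have hzE3 := hE3 hz
    have hxz : x ≠ z := fun h => hxe (hmem13 x hx (h ▸ hz))
    have hecl := hecl2 x z hx hxe hz hze
    obtain ⟨w, hwE, hwcl, hwx, hwz, hwe, lam, mu, hlam, hmu, hvw⟩ :=
      hthird x z hxE hzE3 hxz hecl
    have hwL2 : w ∈ L2 := by
      have hwU : w ∈ L1 ∪ L2 ∪ L3 := by rw [hcover]; exact hwE
      rcases hwU with (hw1 | hw2) | hw3
      · exact absurd (hclsub x z w hxE hzE3 hwcl (by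
          rw [SGKAux.line_eq_closure_pair hS h1 hx hw1 (Ne.symm hwx)]; exact he1)) hecl
      · exact hw2
      · exact absurd (hclsub' x z w hxE hzE3 hwcl (by
          rw [SGKAux.line_eq_closure_pair hS h3 hz hw3 (Ne.symm hwz)]; exact he3)) hecl
    obtain ⟨hx2, hx1⟩ := hco1 x hx hxe
    obtain ⟨hz3, hz1⟩ := hco3 z hz hze
    have hz2 := hz2ne z hz hze
    obtain ⟨hw1, hw2⟩ := hco2 w hwL2 hwe
    have hrepr : v w = (lam * c x 0 + mu * c z 0) • v e + (lam * c x 1 + mu * c z 1) • v a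
        + (mu * c z 2) • v b := by
      rw [hvw, hc x hxE, hc z hzE3, hx2]
      match_scalars <;> ring
    obtain ⟨q0, q1, q2⟩ := hcoord w hwE _ _ _ hrepr
    refine ⟨w, ⟨hwL2, by simpa using hwe⟩, ?_⟩
    have hkey : lam * c x 1 + mu * c z 1 = 0 := by rw [← q1]; exact hw1
    show ε * (c w 0 / c w 2) = δ * (c z 0 / c z 1) - δ * (c x 0 / c x 1)
    rw [q0, q2]
    field_simp
    linear_combination (lam * c x 0 * c x 1 + mu * c z 0 * c x 1) * hz3
      + (δ * c z 2 * c x 0) * hkey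
  have hsum3 : ∀ t ∈ SB, ∀ u ∈ SC, u - t ∈ SA := by
    rintro t ⟨y, hym, rfl⟩ u ⟨z, hzm, rfl⟩
    obtain ⟨hy, hye'⟩ := hym
    obtain ⟨hz, hze'⟩ := hzm
    have hye : y ≠ e := by simpa using hye'
    have hze : z ≠ e := by simpa using hze'
    have hyE := hE2 hy
    have hzE3 := hE3 hz
    have hyz : y ≠ z := fun h => hye (hmem23 y hy (h ▸ hz))
    have hecl := hecl3 y z hy hye hz hze
    obtain ⟨w, hwE, hwcl, hwy, hwz, hwe, lam, mu, hlam, hmu, hvw⟩ :=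
      hthird y z hyE hzE3 hyz hecl
    have hwL1 : w ∈ L1 := by
      have hwU : w ∈ L1 ∪ L2 ∪ L3 := by rw [hcover]; exact hwE
      rcases hwU with (hw1 | hw2) | hw3
      · exact hw1
      · exact absurd (hclsub y z w hyE hzE3 hwcl (by
          rw [SGKAux.line_eq_closure_pair hS h2 hy hw2 (Ne.symm hwy)]; exact he2)) hecl
      · exact absurd (hclsub' y z w hyE hzE3 hwcl (by
          rw [SGKAux.line_eq_closure_pair hS h3 hz hw3 (Ne.symm hwz)]; exact he3)) hecl
    obtain ⟨hy1, hy2⟩ := hco2 y hy hye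
    obtain ⟨hz3, hz1⟩ := hco3 z hz hze
    obtain ⟨hw2, hw1⟩ := hco1 w hwL1 hwe
    have hrepr : v w = (lam * c y 0 + mu * c z 0) • v e + (mu * c z 1) • v a
        + (lam * c y 2 + mu * c z 2) • v b := by
      rw [hvw, hc y hyE, hc z hzE3, hy1]
      match_scalars <;> ring
    obtain ⟨q0, q1, q2⟩ := hcoord w hwE _ _ _ hrepr
    refine ⟨w, ⟨hwL1, by simpa using hwe⟩, ?_⟩
    have hkey : lam * c y 2 + mu * c z 2 = 0 := by rw [← q2]; exact hw2
    show δ * (c w 0 / c w 1) = δ * (c z 0 / c z 1) - ε * (c y 0 / c y 2)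
    rw [q0, q1]
    field_simp
    linear_combination (c y 0 * mu) * hz3 + (δ * c y 0) * hkey
  -- counting
  have hSAcard : SA.encard = (L1 \ {e}).encard := hinjA.encard_image
  have hSBcard : SB.encard = (L2 \ {e}).encard := hinjB.encard_image
  have hSCcard : SC.encard = (L3 \ {e}).encard := hinjC.encard_image
  have hfSA : SA.Finite := Set.toFinite _
  have hfSB : SB.Finite := Set.toFinite _
  have hfSC : SC.Finite := Set.toFinite _
  have hTA : SA.encard = hfSA.toFinset.card := hfSA.encard_eq_coe_toFinset_card
  have hTB : SB.encard = hfSB.toFinset.card := hfSB.encard_eq_coe_toFinset_card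
  have hTC : SC.encard = hfSC.toFinset.card := hfSC.encard_eq_coe_toFinset_card
  set TA := hfSA.toFinset with hTAdef
  set TB := hfSB.toFinset with hTBdef
  set TC := hfSC.toFinset with hTCdef
  have hbig : ∀ L, SGK.IsLine M L → e ∈ L → 2 < L.encard := by
    intro L hL heL
    have hLE := hL.1.subset_ground
    have hne2 : L.encard ≠ 2 := by
      intro h
      exact hno2 ⟨L, hL, by rw [SGKAux.encard_points hS hLE, h]⟩
    obtain ⟨x, hxL, hxe⟩ := hpick L hL
    have hge : 2 ≤ L.encard := by
      have h' := encard_mono (pair_subset heL hxL)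
      rwa [encard_pair (Ne.symm hxe)] at h'
    exact lt_of_le_of_ne hge (Ne.symm hne2)
  have hdiff1 : (L1 \ {e}).encard + 1 = L1.encard := encard_diff_singleton_add_one he1
  have hdiff2 : (L2 \ {e}).encard + 1 = L2.encard := encard_diff_singleton_add_one he2
  have hdiff3 : (L3 \ {e}).encard + 1 = L3.encard := encard_diff_singleton_add_one he3
  have h2A : 2 ≤ TA.card := by
    have hlt : (2 : ℕ∞) < (TA.card : ℕ∞) + 1 := by
      rw [← hTA, hSAcard, hdiff1]
      exact hbig L1 h1 he1
    have h' : (2 : ℕ) < TA.card + 1 := by exact_mod_cast hlt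
    omega
  have h2B : 2 ≤ TB.card := by
    have hlt : (2 : ℕ∞) < (TB.card : ℕ∞) + 1 := by
      rw [← hTB, hSBcard, hdiff2]
      exact hbig L2 h2 he2
    have h' : (2 : ℕ) < TB.card + 1 := by exact_mod_cast hlt
    omega
  have h2C : 2 ≤ TC.card := by
    have hlt : (2 : ℕ∞) < (TC.card : ℕ∞) + 1 := by
      rw [← hTC, hSCcard, hdiff3]
      exact hbig L3 h3 he3
    have h' : (2 : ℕ) < TC.card + 1 := by exact_mod_cast hlt
    omega
  have hAle : TA.card ≤ p := by
    have h' := Finset.card_le_univ TA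
    rwa [ZMod.card] at h'
  have hBle : TB.card ≤ p := by
    have h' := Finset.card_le_univ TB
    rwa [ZMod.card] at h'
  have hCle : TC.card ≤ p := by
    have h' := Finset.card_le_univ TC
    rwa [ZMod.card] at h'
  have hAne : TA.Nonempty := Finset.card_pos.mp (by omega)
  have hBne : TB.Nonempty := Finset.card_pos.mp (by omega)
  have hCne : TC.Nonempty := Finset.card_pos.mp (by omega)
  have hCD1 : min p (TA.card + TB.card - 1) ≤ TC.card := by
    have hsub : TA + TB ⊆ TC := by
      intro u hu
      obtain ⟨s, hs, t, ht, rfl⟩ := Finset.mem_add.mp hu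
      simp only [hTAdef, Set.Finite.mem_toFinset] at hs
      simp only [hTBdef, Set.Finite.mem_toFinset] at ht
      simp only [hTCdef, Set.Finite.mem_toFinset]
      exact hsum1 s hs t ht
    exact le_trans (ZMod.cauchy_davenport hp hAne hBne) (Finset.card_le_card hsub)
  have hCD2 : min p (TC.card + TA.card - 1) ≤ TB.card := by
    have hAnegne : (-TA).Nonempty := by
      obtain ⟨x0, hx0⟩ := hAne
      exact ⟨-x0, by rw [Finset.mem_neg]; simpa⟩
    have hsub : TC + (-TA) ⊆ TB := by
      intro u hu
      obtain ⟨cc, hcc, aa, haa, rfl⟩ := Finset.mem_add.mp hu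
      rw [Finset.mem_neg] at haa
      simp only [hTAdef, Set.Finite.mem_toFinset] at haa
      simp only [hTCdef, Set.Finite.mem_toFinset] at hcc
      simp only [hTBdef, Set.Finite.mem_toFinset]
      obtain ⟨a', ha', rfl⟩ := haa
      have h' := hsum2 a' ha' cc hcc
      rwa [sub_eq_add_neg] at h'
    have hcd := ZMod.cauchy_davenport hp hCne hAnegne
    rw [Finset.card_neg] at hcd
    exact le_trans hcd (Finset.card_le_card hsub)
  have hCD3 : min p (TC.card + TB.card - 1) ≤ TA.card := by
    have hBnegne : (-TB).Nonempty := by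
      obtain ⟨x0, hx0⟩ := hBne
      exact ⟨-x0, by rw [Finset.mem_neg]; simpa⟩
    have hsub : TC + (-TB) ⊆ TA := by
      intro u hu
      obtain ⟨cc, hcc, bb, hbb, rfl⟩ := Finset.mem_add.mp hu
      rw [Finset.mem_neg] at hbb
      simp only [hTBdef, Set.Finite.mem_toFinset] at hbb
      simp only [hTCdef, Set.Finite.mem_toFinset] at hcc
      simp only [hTAdef, Set.Finite.mem_toFinset]
      obtain ⟨b', hb', rfl⟩ := hbb
      have h' := hsum3 b' hb' cc hcc
      rwa [sub_eq_add_neg] at h'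
    have hcd := ZMod.cauchy_davenport hp hCne hBnegne
    rw [Finset.card_neg] at hcd
    exact le_trans hcd (Finset.card_le_card hsub)
  have hAp : TA.card = p := by omega
  have hBp : TB.card = p := by omega
  have hCp : TC.card = p := by omega
  have hfin : ∀ (L : Set α) (T : Finset (ZMod p)), SGK.IsLine M L → e ∈ L →
      ((T.card : ℕ∞) = (L \ {e}).encard) → T.card = p →
      (SGK.points M L).encard = ((p + 1 : ℕ) : ℕ∞) := by
    intro L T hL heL hT hTp
    rw [SGKAux.encard_points hS hL.1.subset_ground, ← encard_diff_singleton_add_one heL,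
      ← hT, hTp]
    push_cast
    ring
  refine ⟨?_, ?_, ?_⟩
  · exact hfin L1 TA h1 he1 (by rw [← hTA, hSAcard]) hAp
  · exact hfin L2 TB h2 he2 (by rw [← hTB, hSBcard]) hBp
  · exact hfin L3 TC h3 he3 (by rw [← hTC, hSCcard]) hCp
end

section
/- For every prime power q and positive integers t, k there is an integer HJ_q(t,k) such that any k-colouring of the points of the affine geometry AG(HJ_q(t,k)−1, q) admits a monochromatic rank-t flat. -/
open Matroid Set

section Helpers
variable {F : Type*} [Field F] {V W : Type*} [AddCommGroup V] [Module F V]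
  [AddCommGroup W] [Module F W]

lemma ai_restrict_iff_image {α : Type*} (v : α → V) (I : Set α) (h : Set.InjOn v I) :
    AffineIndependent F (I.restrict v) ↔
      AffineIndependent F ((↑) : (v '' I) → V) := by
  have : I.restrict v = ((↑) : (v '' I) → V) ∘ (Equiv.Set.imageOfInjOn v I h) := rfl
  rw [this, affineIndependent_equiv]

lemma ai_image_iff (f : V →ᵃ[F] W) (hf : Function.Injective f) (T : Set V) :
    AffineIndependent F ((↑) : (f '' T) → W) ↔ AffineIndependent F ((↑) : T → V) := by
  have h1 : ((↑) : (f '' T) → W) ∘ (Equiv.Set.imageOfInjOn f T hf.injOn)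
      = f ∘ ((↑) : T → V) := rfl
  rw [← affineIndependent_equiv (Equiv.Set.imageOfInjOn f T hf.injOn), h1,
    f.affineIndependent_iff hf]

lemma ai_insert_iff {T : Set V} {w : V} (hw : w ∉ T)
    (hT : AffineIndependent F ((↑) : T → V)) :
    AffineIndependent F ((↑) : ↥(insert w T) → V) ↔ w ∉ affineSpan F T := by
  have hwm : w ∈ insert w T := mem_insert _ _
  set i₀ : ↥(insert w T) := ⟨w, hwm⟩ with hi₀
  have himg : ((↑) : ↥(insert w T) → V) '' {x : ↥(insert w T) | x ≠ i₀} = T := by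
    ext z
    constructor
    · rintro ⟨⟨y, hy⟩, hne, rfl⟩
      simp only [mem_setOf_eq, hi₀, ne_eq, Subtype.ext_iff] at hne
      rcases hy with rfl | hy
      · exact absurd rfl hne
      · exact hy
    · intro hz
      refine ⟨⟨z, mem_insert_of_mem _ hz⟩, ?_, rfl⟩
      simp only [mem_setOf_eq, hi₀, ne_eq, Subtype.ext_iff]
      rintro rfl; exact hw hz
  constructor
  · intro hAI hsp
    have := hAI.notMem_affineSpan_diff i₀ Set.univ
    rw [show (Set.univ \ {i₀}) = {x : ↥(insert w T) | x ≠ i₀} by ext; simp, himg] at this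
    exact this hsp
  · intro hsp
    refine AffineIndependent.affineIndependent_of_notMem_span (i := i₀) ?_ (by rwa [himg])
    let he : T ≃ {x : ↥(insert w T) // x ≠ i₀} :=
      ⟨fun x => ⟨⟨x, mem_insert_of_mem _ x.2⟩, by
          simp only [hi₀, ne_eq, Subtype.ext_iff]; rintro rfl; exact hw x.2⟩,
       fun y => ⟨y.1.1, by
          rcases y.1.2 with h | h
          · exact absurd (Subtype.ext h) y.2
          · exact h⟩,
       fun x => rfl, fun y => by simp⟩
    have hcomp : (fun x : {x : ↥(insert w T) // x ≠ i₀} => (x.1 : V)) ∘ he = ((↑) : T → V) :=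
      funext fun x => rfl
    rw [← affineIndependent_equiv he, hcomp]
    exact hT

end Helpers

section Frame
variable {F : Type*} [Field F] (m : ℕ)

noncomputable def stdFrame : Option (Fin m) → (Fin m → F) :=
  fun o => o.elim 0 (fun j => Pi.single j 1)

lemma stdFrame_ai : AffineIndependent F (stdFrame (F := F) m) := by
  classical
  rw [affineIndependent_iff_linearIndependent_vsub F _ none]
  let e : Fin m ≃ {x : Option (Fin m) // x ≠ none} :=
    ⟨fun j => ⟨some j, by simp⟩, fun y => y.1.get (Option.ne_none_iff_isSome.1 y.2),
     fun j => rfl, fun y => by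
        rcases y with ⟨y, hy⟩
        cases y
        · exact absurd rfl hy
        · rfl⟩
  rw [← linearIndependent_equiv e]
  have : (fun (i : {x : Option (Fin m) // x ≠ none}) =>
      stdFrame (F := F) m i -ᵥ stdFrame (F := F) m none) ∘ e
      = fun j : Fin m => Pi.single j 1 := by
    funext j
    simp [stdFrame, e]
  rw [this]
  have hb := (Pi.basisFun F (Fin m)).linearIndependent
  have hbe : ⇑(Pi.basisFun F (Fin m)) = fun j : Fin m => (Pi.single j 1 : Fin m → F) :=
    funext fun j => Pi.basisFun_apply F (Fin m) j
  rwa [hbe] at hb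

lemma stdFrame_span : affineSpan F (Set.range (stdFrame (F := F) m)) = ⊤ := by
  classical
  refine top_le_iff.1 fun w _ => ?_
  have h0 : (0 : Fin m → F) ∈ affineSpan F (Set.range (stdFrame (F := F) m)) :=
    subset_affineSpan _ _ ⟨none, rfl⟩
  have hdir : (w - 0) ∈ (affineSpan F (Set.range (stdFrame (F := F) m))).direction := by
    rw [direction_affineSpan]
    have hsingle : ∀ j : Fin m, (Pi.single j 1 : Fin m → F) ∈
        vectorSpan F (Set.range (stdFrame (F := F) m)) := by
      intro j
      have := vsub_mem_vectorSpan F (Set.mem_range_self (f := stdFrame (F := F) m) (some j))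
        (Set.mem_range_self (f := stdFrame (F := F) m) none)
      simpa [stdFrame] using this
    have hspan : Submodule.span F (Set.range fun j : Fin m => (Pi.single j 1 : Fin m → F)) = ⊤ := by
      have := (Pi.basisFun F (Fin m)).span_eq
      rw [show Set.range (Pi.basisFun F (Fin m)) =
        Set.range (fun j : Fin m => (Pi.single j 1 : Fin m → F)) by
          ext x; simp [Pi.basisFun_apply]] at this
      exact this
    have : (w - 0) ∈ Submodule.span F (Set.range fun j : Fin m => (Pi.single j 1 : Fin m → F)) := by
      rw [hspan]; trivial
    exact Submodule.span_le.2 (by rintro x ⟨j, rfl⟩; exact hsingle j) this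
  have := AffineSubspace.vadd_mem_of_mem_direction hdir h0
  simpa using this

lemma ai_encard_le {U : Set (Fin m → F)} [Fintype F]
    (hU : AffineIndependent F ((↑) : U → (Fin m → F))) : U.encard ≤ (m + 1 : ℕ) := by
  classical
  have hfin : U.Finite := Set.toFinite U
  have : Fintype U := hfin.fintype
  rcases isEmpty_or_nonempty U with h | h
  · simp [Set.encard_eq_coe_toFinset_card]
  · have hcard := hU.finrank_vectorSpan_add_one
    have hle : Module.finrank F (vectorSpan F (Set.range ((↑) : U → (Fin m → F)))) ≤ m := by
      have := Submodule.finrank_le (vectorSpan F (Set.range ((↑) : U → (Fin m → F))))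
      simpa [Module.finrank_pi] using this
    rw [Set.encard_eq_coe_toFinset_card]
    simp only [Set.toFinset_card]
    have e : Fintype.card ↥U = Fintype.card {x // x ∈ U} := rfl
    rw [e]
    exact_mod_cast (by omega : Fintype.card {x // x ∈ U} ≤ m + 1)
end Frame

/-- Geometric Hales–Jewett theorem: for every finite field of order `q` (a prime power)
and positive integers `t`, `k`, there is `N` such that any `k`-colouring of the points of
`AG(N - 1, q)` admits a monochromatic rank-`t` flat. -/
theorem stmt_9 (F : Type) [Field F] [Fintype F] (t k : ℕ) (ht : 1 ≤ t) (hk : 1 ≤ k) :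
    ∃ N : ℕ, 1 ≤ N ∧ ∀ (α : Type) (M : Matroid α), SGK.IsAG F (N - 1) M →
      ∀ c : α → Fin k, ∃ Fl, M.IsFlat Fl ∧ SGK.rk M Fl = (t : ℕ∞) ∧
        ∃ i, ∀ x ∈ Fl, c x = i := by
  classical
  obtain ⟨m, rfl⟩ : ∃ m, t = m + 1 := ⟨t - 1, by omega⟩
  obtain ⟨n, hn⟩ := Combinatorics.Subspace.exists_mono_in_high_dimension_fin F (Fin k) (Fin m)
  refine ⟨n + 1, by omega, ?_⟩
  intro α M hAG c
  simp only [Nat.add_sub_cancel] at hAG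
  obtain ⟨v, hvi, hvinj, hvsurj⟩ := hAG
  choose rep hrepE hrep using hvsurj
  obtain ⟨l, i, hmono⟩ := hn (fun w => c (rep w))
  -- the affine map underlying the combinatorial subspace
  let L : (Fin m → F) →ₗ[F] (Fin n → F) :=
    LinearMap.pi (fun idx => Sum.elim (fun _ => (0 : (Fin m → F) →ₗ[F] F))
      (fun e => LinearMap.proj e) (l.idxFun idx))
  have hlaff : ∀ x : Fin m → F, l x = L (x -ᵥ 0) +ᵥ l 0 := by
    intro x; funext idx
    cases h : l.idxFun idx with
    | inl a =>
        simp [Combinatorics.Subspace.apply_inl h, L, LinearMap.pi_apply, h]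
    | inr e =>
        simp [Combinatorics.Subspace.apply_inr h, L, LinearMap.pi_apply, h]
  let A : (Fin m → F) →ᵃ[F] (Fin n → F) := AffineMap.mk' (⇑l) L 0 hlaff
  have hA : ∀ x, A x = l x := fun _ => rfl
  have hAinj : Function.Injective ⇑A := by
    intro x y hxy
    funext e
    obtain ⟨idx, hidx⟩ := l.proper e
    have h2 := congrFun hxy idx
    rwa [hA, hA, Combinatorics.Subspace.apply_inr hidx,
      Combinatorics.Subspace.apply_inr hidx] at h2
  set S : Set (Fin n → F) := Set.range ⇑A with hS
  let q : Option (Fin m) → (Fin n → F) := ⇑A ∘ stdFrame m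
  have hqAI : AffineIndependent F q := (A.affineIndependent_iff hAinj).2 (stdFrame_ai m)
  have hqinj : Function.Injective q := hqAI.injective
  set T₀ : Set (Fin n → F) := Set.range q with hT₀
  have hT₀S : T₀ ⊆ S := by rintro _ ⟨o, rfl⟩; exact ⟨stdFrame m o, rfl⟩
  have hT₀AI : AffineIndependent F ((↑) : T₀ → (Fin n → F)) := hqAI.range
  have hspanT₀ : (affineSpan F T₀ : Set (Fin n → F)) = S := by
    have h1 : T₀ = ⇑A '' Set.range (stdFrame (F := F) m) := Set.range_comp _ _
    rw [h1, ← AffineSubspace.map_span, stdFrame_span]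
    ext w
    simp [AffineSubspace.mem_map, hS]
  have hspanT₀' : ∀ w, w ∈ affineSpan F T₀ ↔ w ∈ S := fun w => by
    rw [← AffineSubspace.mem_coe, hspanT₀]
  -- the points of the flat-to-be
  let ee : Option (Fin m) → α := fun o => rep (q o)
  have heeE : ∀ o, ee o ∈ M.E := fun o => hrepE _
  have heev : ∀ o, v (ee o) = q o := fun o => hrep _
  have heeinj : Function.Injective ee := fun o o' h => hqinj (by rw [← heev, ← heev, h])
  set J : Set α := Set.range ee with hJ
  have hJE : J ⊆ M.E := by rintro _ ⟨o, rfl⟩; exact heeE o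
  have hvJ : v '' J = T₀ := by
    rw [hJ, ← Set.range_comp, hT₀]
    exact congrArg Set.range (funext heev)
  have hindep : ∀ I, I ⊆ M.E →
      (M.Indep I ↔ AffineIndependent F ((↑) : (v '' I) → (Fin n → F))) := by
    intro I hIE
    rw [hvi I hIE, ai_restrict_iff_image v I (hvinj.mono hIE)]
  set Fl : Set α := {e | e ∈ M.E ∧ v e ∈ S} with hFl
  have hFlE : Fl ⊆ M.E := fun e he => he.1
  have hJFl : J ⊆ Fl := by
    rintro _ ⟨o, rfl⟩
    refine ⟨heeE o, ?_⟩
    rw [heev o]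
    exact hT₀S ⟨o, rfl⟩
  have hJindep : M.Indep J := (hindep J hJE).2 (by rw [hvJ]; exact hT₀AI)
  have hkey : ∀ e ∈ M.E, e ∉ J → (M.Indep (insert e J) ↔ v e ∉ affineSpan F T₀) := by
    intro e heE heJ
    have hne : v e ∉ T₀ := by
      rw [← hvJ]
      rintro ⟨x, hxJ, hxe⟩
      exact heJ (by rwa [hvinj (hJE hxJ) heE hxe] at hxJ)
    have h1 : v '' (insert e J) = insert (v e) T₀ := by rw [Set.image_insert_eq, hvJ]
    rw [hindep _ (insert_subset heE hJE), h1, ai_insert_iff hne hT₀AI]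
  have hJbasis : M.IsBasis J Fl := by
    refine hJindep.isBasis_of_forall_insert hJFl ?_
    rintro e ⟨heFl, heJ⟩
    rw [Matroid.dep_iff]
    refine ⟨?_, insert_subset heFl.1 hJE⟩
    rw [hkey e heFl.1 heJ, not_not, hspanT₀']
    exact heFl.2
  have hclJ : M.closure J ⊆ Fl := by
    intro f hf
    have hfE : f ∈ M.E := M.closure_subset_ground J hf
    by_cases hfJ : f ∈ J
    · exact hJFl hfJ
    by_cases hvT : v f ∈ T₀
    · exact ⟨hfE, hT₀S hvT⟩
    have hnindep : ¬ M.Indep (insert f J) := by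
      rw [hJindep.insert_indep_iff_of_notMem hfJ]
      simp [hf]
    rw [hkey f hfE hfJ, not_not] at hnindep
    exact ⟨hfE, (hspanT₀' _).1 hnindep⟩
  have hclFl : M.closure Fl = Fl := by
    refine subset_antisymm ?_ (M.subset_closure Fl hFlE)
    rw [← hJbasis.closure_eq_closure]
    exact hclJ
  have hFlat : M.IsFlat Fl := by
    constructor
    · intro I X hIF hIX
      calc X ⊆ M.closure I := hIX.subset_closure
        _ = M.closure Fl := hIF.closure_eq_closure
        _ = Fl := hclFl
    · exact hFlE
  have hrk : SGK.rk M Fl = ((m + 1 : ℕ) : ℕ∞) := by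
    apply le_antisymm
    · apply sSup_le
      rintro x ⟨I, hI, hIFl, rfl⟩
      have hIE : I ⊆ M.E := hI.subset_ground
      have hAIset := (hindep I hIE).1 hI
      have hIS : v '' I ⊆ S := by rintro _ ⟨y, hy, rfl⟩; exact (hIFl hy).2
      have hAU : ⇑A '' (⇑A ⁻¹' (v '' I)) = v '' I :=
        Set.image_preimage_eq_of_subset hIS
      have hUAI : AffineIndependent F ((↑) : (⇑A ⁻¹' (v '' I)) → (Fin m → F)) := by
        rw [← ai_image_iff A hAinj, hAU]
        exact hAIset
      have hUcard := ai_encard_le m hUAI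
      have h1 : I.encard = (v '' I).encard := ((hvinj.mono hIE).encard_image).symm
      have h2 : (v '' I).encard = (⇑A ⁻¹' (v '' I)).encard := by
        conv_lhs => rw [← hAU]
        exact hAinj.injOn.encard_image
      rw [h1, h2]
      exact hUcard
    · apply le_sSup
      refine ⟨J, hJindep, hJFl, ?_⟩
      have h3 : J.encard = (Set.univ : Set (Option (Fin m))).encard := by
        rw [hJ, ← Set.image_univ, heeinj.injOn.encard_image]
      rw [h3, Set.encard_univ]
      simp [ENat.card_eq_coe_fintype_card]
  refine ⟨Fl, hFlat, by exact_mod_cast hrk, i, ?_⟩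
  rintro x ⟨hxE, hxS⟩
  obtain ⟨y, hy⟩ := hxS
  have hx : x = rep (l y) := by
    apply hvinj hxE (hrepE _)
    rw [hrep, ← hy, hA]
  rw [hx]
  exact hmono y
end

section
/- For every prime power q and positive integer t there is an integer R_q(t) such that any 2-colouring of the points of the projective geometry PG(R_q(t)−1, q) admits a monochromatic rank-t flat. -/
open Matroid Set

namespace GLRAux

private def IsChain' {F : Type} [Field F] {V : Type} [AddCommGroup V] [Module F V]
    (L : ℕ) (C : V → Bool) (u : ℕ → V) (W : ℕ → Submodule F V) : Prop :=
  (∀ i, i < L → u i ∉ W i) ∧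
  (∀ i j, i < j → j < L → u j ∈ W i) ∧
  (∀ i j, i < j → j < L → W j ≤ W i) ∧
  (∀ i, i < L → ∀ w ∈ W i, C (u i + w) = C (u i))

private lemma transfer {F : Type} [Field F] {V₁ V₂ : Type} [AddCommGroup V₁] [Module F V₁]
    [AddCommGroup V₂] [Module F V₂] (ι : V₁ →ₗ[F] V₂) (hι : Function.Injective ι)
    {L : ℕ} (C : V₂ → Bool) {u : ℕ → V₁} {W : ℕ → Submodule F V₁}
    (h : IsChain' L (fun z => C (ι z)) u W) :
    IsChain' L C (fun i => ι (u i)) (fun i => (W i).map ι) := by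
  obtain ⟨h1, h2, h3, h4⟩ := h
  refine ⟨?_, ?_, ?_, ?_⟩
  · rintro i hi ⟨w, hw, hw2⟩
    exact h1 i hi (by rwa [hι hw2] at hw)
  · exact fun i j hij hj => Submodule.mem_map_of_mem (h2 i j hij hj)
  · exact fun i j hij hj => Submodule.map_mono (h3 i j hij hj)
  · rintro i hi w ⟨w', hw', rfl⟩
    rw [← map_add]
    exact h4 i hi w' hw'

private lemma lemA (F : Type) [Field F] [Fintype F] (d : ℕ) :
    ∃ n : ℕ, ∀ C : (Fin n → F) → Bool,
      ∃ (φ : (Fin d → F) →ₗ[F] (Fin n → F)) (u : Fin n → F),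
        Function.Injective φ ∧ u ∉ LinearMap.range φ ∧ ∀ x, C (u + φ x) = C u := by
  obtain ⟨m, hm⟩ := Combinatorics.Subspace.exists_mono_in_high_dimension_fin F Bool (Fin d)
  refine ⟨m + 1, fun C => ?_⟩
  obtain ⟨l, c0, hc0⟩ := hm fun y => C (Fin.snoc y 1)
  set L0 : (Fin d → F) →ₗ[F] (Fin m → F) :=
    { toFun := fun x i => Sum.elim (fun _ => (0:F)) x (l.idxFun i)
      map_add' := by intro x y; funext i; rcases h : l.idxFun i with a | e <;> simp [h]
      map_smul' := by intro a x; funext i; rcases h : l.idxFun i with a' | e <;> simp [h] }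
    with hL0
  set b : Fin m → F := fun i => Sum.elim id (fun _ => (0:F)) (l.idxFun i) with hb
  have key : ∀ x, b + L0 x = l x := by
    intro x; funext i
    rcases h : l.idxFun i with a | e
    · rw [l.apply_inl h]; simp [hb, hL0, h]
    · rw [l.apply_inr h]; simp [hb, hL0, h]
  set ψ : (Fin m → F) →ₗ[F] (Fin (m+1) → F) :=
    { toFun := fun y => Fin.snoc y 0
      map_add' := by
        intro x y; funext i
        refine Fin.lastCases ?_ (fun j => ?_) i <;> simp
      map_smul' := by
        intro a x; funext i
        refine Fin.lastCases ?_ (fun j => ?_) i <;> simp }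
    with hψ
  have hsnoc_add : ∀ (y z : Fin m → F), (Fin.snoc y (1:F) : Fin (m+1) → F) + (Fin.snoc z 0 : Fin (m+1) → F) = (Fin.snoc (y + z) 1 : Fin (m+1) → F) := by
    intro y z; funext i
    refine Fin.lastCases ?_ (fun j => ?_) i <;> simp
  refine ⟨ψ.comp L0, Fin.snoc b 1, ?_, ?_, ?_⟩
  · have hL0inj : Function.Injective L0 := by
      rw [injective_iff_map_eq_zero]
      intro x hx; funext e
      obtain ⟨i, hi⟩ := l.proper e
      have := congrFun hx i
      simpa [hL0, hi] using this
    have hψinj : Function.Injective ψ := by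
      intro y z h
      funext i
      have := congrFun h (Fin.castSucc i)
      simpa [hψ] using this
    exact hψinj.comp hL0inj
  · rintro ⟨z, hz⟩
    have := congrFun hz (Fin.last m)
    simp [hψ] at this
  · intro x
    have h1 : (Fin.snoc b 1 : Fin (m+1) → F) + (ψ.comp L0) x
        = (Fin.snoc (l x) 1 : Fin (m+1) → F) := by
      show (Fin.snoc b 1 : Fin (m+1) → F) + (Fin.snoc (L0 x) 0 : Fin (m+1) → F) = _
      rw [hsnoc_add, key]
    have h2 : (Fin.snoc b 1 : Fin (m+1) → F)
        = (Fin.snoc (l (0 : Fin d → F)) 1 : Fin (m+1) → F) := by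
      rw [← key 0, map_zero, add_zero]
    rw [h1, h2]
    exact (hc0 x).trans (hc0 0).symm

private lemma chain (F : Type) [Field F] [Fintype F] (L : ℕ) :
    ∃ n : ℕ, ∀ C : (Fin n → F) → Bool,
      ∃ (u : ℕ → (Fin n → F)) (W : ℕ → Submodule F (Fin n → F)), IsChain' L C u W := by
  induction L with
  | zero =>
    refine ⟨0, fun C => ⟨fun _ => 0, fun _ => ⊥, ?_, ?_, ?_, ?_⟩⟩ <;>
      first
      | exact fun i hi => absurd hi (Nat.not_lt_zero _)
      | exact fun i j _ hj => absurd hj (Nat.not_lt_zero _)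
  | succ L ih =>
    obtain ⟨d, hd⟩ := ih
    obtain ⟨n, hn⟩ := lemA F d
    refine ⟨n, fun C => ?_⟩
    obtain ⟨φ, u0, hinj, hnr, hco⟩ := hn C
    obtain ⟨u', W', hch⟩ := hd (fun z => C (φ z))
    obtain ⟨h1, h2, h3, h4⟩ := transfer φ hinj C hch
    refine ⟨fun i => Nat.casesOn i u0 (fun k => φ (u' k)),
            fun i => Nat.casesOn i (LinearMap.range φ) (fun k => (W' k).map φ), ?_, ?_, ?_, ?_⟩
    · rintro (_ | i) hi
      · exact hnr
      · exact h1 i (by omega)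
    · rintro (_ | i) (_ | j) hij hj
      · omega
      · exact LinearMap.mem_range_self φ (u' j)
      · omega
      · exact h2 i j (by omega) (by omega)
    · rintro (_ | i) (_ | j) hij hj
      · omega
      · rintro x ⟨w, _, rfl⟩
        exact LinearMap.mem_range_self φ w
      · omega
      · exact h3 i j (by omega) (by omega)
    · rintro (_ | i) hi w hw
      · obtain ⟨x, rfl⟩ := hw
        exact hco x
      · exact h4 i (by omega) w hw

private lemma mainVec (F : Type) [Field F] [Fintype F] (t : ℕ) (ht : 1 ≤ t) :
    ∃ N : ℕ, ∀ C : (Fin N → F) → Bool, (∀ (a : F) (x : Fin N → F), a ≠ 0 → C (a • x) = C x) →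
      ∃ x : Fin t → (Fin N → F), LinearIndependent F x ∧
        ∃ c0 : Bool, ∀ z ∈ Submodule.span F (Set.range x), z ≠ 0 → C z = c0 := by
  classical
  obtain ⟨n, hn⟩ := chain F (2*t-1)
  refine ⟨n, fun C hC => ?_⟩
  obtain ⟨u, W, h1, h2, h3, h4⟩ := hn C
  -- pigeonhole
  obtain ⟨b, hb⟩ : ∃ b : Bool, t ≤ (Finset.univ.filter fun i : Fin (2*t-1) => C (u i) = b).card := by
    by_contra hcon
    push_neg at hcon
    have htr := hcon true
    have hfa := hcon false
    have key := Finset.card_filter_add_card_filter_not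
      (s := (Finset.univ : Finset (Fin (2*t-1)))) (p := fun i => C (u i) = true)
    simp only [Bool.not_eq_true, Finset.card_univ, Fintype.card_fin] at key
    omega
  obtain ⟨s, hs_sub, hs_card⟩ := Finset.exists_subset_card_eq hb
  set σ : Fin t ↪o Fin (2*t-1) := s.orderEmbOfFin hs_card with hσ
  have hσcol : ∀ j, C (u (σ j)) = b := by
    intro j
    have hmem : σ j ∈ s := s.orderEmbOfFin_mem hs_card j
    have := hs_sub hmem
    simpa using (Finset.mem_filter.mp this).2
  have hσlt : ∀ j : Fin t, (σ j : ℕ) < 2*t-1 := fun j => (σ j).isLt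
  set x : Fin t → (Fin n → F) := fun j => u (σ j) with hx
  -- decomposition
  have decomp : ∀ g : Fin t → F, g ≠ 0 → ∃ (j0 : Fin t) (w : Fin n → F),
      w ∈ W (σ j0) ∧ (∑ j, g j • x j) = g j0 • (u (σ j0) + w) ∧ g j0 ≠ 0 := by
    intro g hg
    set T : Finset (Fin t) := Finset.univ.filter (fun j => g j ≠ 0) with hT
    have hTne : T.Nonempty := by
      obtain ⟨j, hj⟩ := Function.ne_iff.mp hg
      refine ⟨j, by simp only [hT, Finset.mem_filter, Finset.mem_univ, true_and]; simpa using hj⟩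
    set j0 := T.min' hTne with hj0
    have hj0T : j0 ∈ T := T.min'_mem hTne
    have hgj0 : g j0 ≠ 0 := by simpa [hT] using (Finset.mem_filter.mp hj0T).2
    set w : Fin n → F := (g j0)⁻¹ • ∑ j ∈ T.erase j0, g j • x j with hw
    have hwW : w ∈ W (σ j0) := by
      refine Submodule.smul_mem _ _ (Submodule.sum_mem _ ?_)
      intro j hj
      have hjT := Finset.mem_of_mem_erase hj
      have hjne := Finset.ne_of_mem_erase hj
      have hlt : j0 < j := lt_of_le_of_ne (T.min'_le j hjT) (Ne.symm hjne)
      have : (σ j0 : ℕ) < (σ j : ℕ) := σ.strictMono hlt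
      exact Submodule.smul_mem _ _ (h2 (σ j0) (σ j) this (hσlt j))
    refine ⟨j0, w, hwW, ?_, hgj0⟩
    have hsum1 : (∑ j, g j • x j) = ∑ j ∈ T, g j • x j := by
      refine (Finset.sum_subset (Finset.subset_univ T) ?_).symm
      intro j _ hjT
      have hgj : g j = 0 := by
        by_contra hne
        exact hjT (by simp [hT, hne])
      rw [hgj, zero_smul]
    rw [hsum1, ← Finset.add_sum_erase _ _ hj0T, smul_add, hw, smul_inv_smul₀ hgj0]
  -- linear independence
  have hxli : LinearIndependent F x := by
    rw [Fintype.linearIndependent_iff]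
    intro g hg0
    by_contra hcon
    push_neg at hcon
    obtain ⟨j, hj⟩ := hcon
    have hgne : g ≠ 0 := fun h => hj (by rw [h]; rfl)
    obtain ⟨j0, w, hwW, heq, hgj0⟩ := decomp g hgne
    rw [hg0] at heq
    have : u (σ j0) + w = 0 := by
      rcases smul_eq_zero.mp heq.symm with h | h
      · exact absurd h hgj0
      · exact h
    have : u (σ j0) = -w := eq_neg_of_add_eq_zero_left this
    exact h1 (σ j0) (hσlt j0) (by rw [this]; exact Submodule.neg_mem _ hwW)
  refine ⟨x, hxli, b, ?_⟩
  intro z hz hz0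
  obtain ⟨g, hgsum⟩ := (Submodule.mem_span_range_iff_exists_fun F).mp hz
  have hgne : g ≠ 0 := by
    rintro rfl
    apply hz0
    rw [← hgsum]
    simp
  obtain ⟨j0, w, hwW, heq, hgj0⟩ := decomp g hgne
  rw [← hgsum, heq, hC _ _ hgj0]
  rw [h4 (σ j0) (hσlt j0) w hwW]
  exact hσcol j0

end GLRAux

/-- Graham–Leeb–Rothschild geometric Ramsey theorem: for every finite field of order `q`
(a prime power) and positive integer `t`, there is `N` such that any 2-colouring of the
points of `PG(N - 1, q)` admits a monochromatic rank-`t` flat. -/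
theorem stmt_10 (F : Type) [Field F] [Fintype F] (t : ℕ) (ht : 1 ≤ t) :
    ∃ N : ℕ, 1 ≤ N ∧ ∀ (α : Type) (M : Matroid α), SGK.IsPG F N M →
      ∀ c : α → Bool, ∃ Fl, M.IsFlat Fl ∧ SGK.rk M Fl = (t : ℕ∞) ∧
        ∃ i, ∀ x ∈ Fl, c x = i := by
    classical
  obtain ⟨N, hN⟩ := GLRAux.mainVec F t ht
  have hN1 : 1 ≤ N := by
    obtain ⟨x, hxli, -⟩ := hN (fun _ => true) (fun _ _ _ => rfl)
    by_contra hcon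
    have h0 : x ⟨0, ht⟩ ≠ 0 := hxli.ne_zero _
    apply h0
    funext i
    exact absurd i.isLt (by omega)
  refine ⟨N, hN1, fun α M hM c => ?_⟩
  obtain ⟨v, hvIndep, hvne, hvinj, hvsurj⟩ := hM
  have hone : (fun _ => (1:F) : Fin N → F) ≠ 0 := by
    intro h
    have := congrFun h ⟨0, hN1⟩
    simpa using this
  obtain ⟨e0, he0, -⟩ := hvsurj _ hone
  have hptE : ∀ S : Submodule F (Fin N → F), ∃ e : α,
      (∃ f, f ∈ M.E ∧ S = Submodule.span F {v f}) → (e ∈ M.E ∧ S = Submodule.span F {v e}) := by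
    intro S
    by_cases h : ∃ f, f ∈ M.E ∧ S = Submodule.span F {v f}
    · obtain ⟨f, hf, hS⟩ := h
      exact ⟨f, fun _ => ⟨hf, hS⟩⟩
    · exact ⟨e0, fun h' => absurd h' h⟩
  choose pt hpt using hptE
  have hpt_self : ∀ e, e ∈ M.E → pt (Submodule.span F {v e}) = e := by
    intro e he
    obtain ⟨hE, hsp⟩ := hpt _ ⟨e, he, rfl⟩
    exact (hvinj e he _ hE hsp).symm
  obtain ⟨x, hxli, c0, hc0⟩ := hN (fun z => c (pt (Submodule.span F {z})))
    (fun a z ha => by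
      show c (pt (Submodule.span F {a • z})) = c (pt (Submodule.span F {z}))
      rw [Submodule.span_singleton_smul_eq (IsUnit.mk0 a ha)])
  set U : Submodule F (Fin N → F) := Submodule.span F (Set.range x) with hU
  have hUrank : Module.finrank F U = t := by
    rw [hU, finrank_span_eq_card hxli, Fintype.card_fin]
  set Fl : Set α := {e | e ∈ M.E ∧ v e ∈ U} with hFl
  have hFlsub : Fl ⊆ M.E := fun e he => he.1
  have hcol : ∀ e ∈ Fl, c e = c0 := by
    intro e he
    have hvz : v e ≠ 0 := hvne e he.1
    have hmem : v e ∈ Submodule.span F (Set.range x) := he.2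
    have h : c (pt (Submodule.span F {v e})) = c0 := hc0 (v e) hmem hvz
    rwa [hpt_self e he.1] at h
  have hInjOn : ∀ I : Set α, LinearIndependent F (I.restrict v) → Set.InjOn v I := by
    intro I hli a ha b hb hab
    have := hli.injective (a₁ := ⟨a, ha⟩) (a₂ := ⟨b, hb⟩)
      (show I.restrict v ⟨a, ha⟩ = I.restrict v ⟨b, hb⟩ from hab)
    exact congrArg Subtype.val this
  have hflat : M.IsFlat Fl := by
    refine ⟨?_, hFlsub⟩
    intro I X hIF hIX y hy
    by_contra hyF
    have hyE : y ∈ M.E := hIX.subset_ground hy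
    have hvyU : v y ∉ U := fun h => hyF ⟨hyE, h⟩
    have hIE : I ⊆ M.E := hIF.indep.subset_ground
    have hli : LinearIndependent F (I.restrict v) := (hvIndep I hIE).mp hIF.indep
    have hinjI : Set.InjOn v I := hInjOn I hli
    have hImg : LinearIndependent F (fun z : (v '' I) => (z : Fin N → F)) :=
      (linearIndepOn_iff_image hinjI).mp hli
    have hspan : Submodule.span F (v '' I) ≤ U := by
      rw [Submodule.span_le]
      rintro _ ⟨a, ha, rfl⟩
      exact (hIF.subset ha).2
    have hnotin : v y ∉ Submodule.span F (v '' I) := fun h => hvyU (hspan h)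
    have hins := LinearIndepOn.id_insert hImg hnotin
    have hyvI : v y ∉ v '' I := fun h => hnotin (Submodule.subset_span h)
    have hinj2 : Set.InjOn v (insert y I) := by
      intro a ha b hb hab
      rcases Set.mem_insert_iff.mp ha with rfl | ha' <;>
        rcases Set.mem_insert_iff.mp hb with rfl | hb'
      · rfl
      · exact absurd (by rw [hab]; exact Set.mem_image_of_mem v hb') hyvI
      · exact absurd (by rw [← hab]; exact Set.mem_image_of_mem v ha') hyvI
      · exact hinjI ha' hb' hab
    have hli2 : LinearIndependent F ((insert y I).restrict v) :=
      (linearIndepOn_iff_image hinj2).mpr (by rw [Set.image_insert_eq]; exact hins)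
    have hIndep2 : M.Indep (insert y I) := (hvIndep _ (Set.insert_subset hyE hIE)).mpr hli2
    have hyI : y ∈ I := hIX.mem_of_insert_indep hy hIndep2
    exact hyF (hIF.subset hyI)
  have hrk : SGK.rk M Fl = (t : ℕ∞) := by
    simp only [SGK.rk]
    apply le_antisymm
    · apply sSup_le
      rintro n ⟨I, hI, hIFl, rfl⟩
      have hIE : I ⊆ M.E := hI.subset_ground
      have hli : LinearIndependent F (I.restrict v) := (hvIndep I hIE).mp hI
      have hw : LinearIndependent F (fun i : I => (⟨v i, (hIFl i.2).2⟩ : U)) := by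
        apply LinearIndependent.of_comp U.subtype
        exact hli
      have hcard := hw.cardinalMk_le_finrank
      rw [hUrank] at hcard
      have h2 : Cardinal.toENat (Cardinal.mk I) ≤ Cardinal.toENat ((t : ℕ) : Cardinal) :=
        Cardinal.toENat.monotone' hcard
      rwa [Cardinal.toENat_nat] at h2
    · have hx0 : ∀ j : Fin t, x j ≠ 0 := fun j => hxli.ne_zero j
      have hsp : ∀ j : Fin t, Submodule.span F {x j} ≤ U := by
        intro j
        rw [Submodule.span_singleton_le_iff_mem]
        exact Submodule.subset_span ⟨j, rfl⟩
      have hee : ∀ j : Fin t, pt (Submodule.span F {x j}) ∈ M.E ∧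
          Submodule.span F {x j} = Submodule.span F {v (pt (Submodule.span F {x j}))} := by
        intro j
        obtain ⟨e, he, hsp'⟩ := hvsurj (x j) (hx0 j)
        exact hpt _ ⟨e, he, hsp'⟩
      set ee : Fin t → α := fun j => pt (Submodule.span F {x j}) with heedef
      have heeE : ∀ j, ee j ∈ M.E := fun j => (hee j).1
      have hveU : ∀ j, v (ee j) ∈ Submodule.span F {x j} := by
        intro j
        have h := (hee j).2
        conv_lhs => rw [h]
        exact Submodule.mem_span_singleton_self _
      have hva' : ∀ j, ∃ a : F, a ≠ 0 ∧ v (ee j) = a • x j := by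
        intro j
        obtain ⟨a, ha⟩ := Submodule.mem_span_singleton.mp (hveU j)
        refine ⟨a, ?_, ha.symm⟩
        rintro rfl
        exact hvne _ (heeE j) (by rw [← ha, zero_smul])
      choose a ha0 hva using hva'
      have hgli : LinearIndependent F (fun j => v (ee j)) := by
        have h := hxli.units_smul (fun j => Units.mk0 (a j) (ha0 j))
        convert h using 1
        funext j
        rw [hva j]
        rfl
      have heeinj : Function.Injective ee := fun j k hjk => hgli.injective (congrArg v hjk)
      set I : Set α := Set.range ee with hI
      have hIFl : I ⊆ Fl := by
        rintro _ ⟨j, rfl⟩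
        exact ⟨heeE j, hsp j (hveU j)⟩
      have hIE : I ⊆ M.E := fun e he => hFlsub (hIFl he)
      have hliI : LinearIndependent F (I.restrict v) := by
        refine (linearIndependent_equiv (Equiv.ofInjective ee heeinj)
          (f := I.restrict v)).mp ?_
        exact hgli
      have hIndepI : M.Indep I := (hvIndep I hIE).mpr hliI
      have hIcard : I.encard = (t : ℕ∞) := by
        rw [hI, ← Set.image_univ, Set.InjOn.encard_image heeinj.injOn]
        simp [Set.encard_univ]
      exact le_sSup ⟨I, hIndepI, hIFl, hIcard⟩
  exact ⟨Fl, hflat, hrk, c0, hcol⟩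
end

section
/- For every prime p and integer k ≥ 1 there is an integer N such that every simple GF(p)-representable matroid of rank at least N with girth at least five contains a rank-k flat that is an independent set. -/
open Matroid Set

namespace Stmt14Aux

variable {α : Type*} {M : Matroid α}

lemma exists_minimal_dep (M : Matroid α) :
    ∀ m : ℕ, ∀ X : Set α, X.Finite → X.ncard ≤ m → M.Dep X → ∃ C ⊆ X, Minimal M.Dep C := by
  intro m
  induction m with
  | zero =>
    intro X hfin hcard hdep
    rw [Nat.le_zero, Set.ncard_eq_zero hfin] at hcard
    subst hcard
    exact absurd M.empty_indep (Matroid.dep_iff.mp hdep).1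
  | succ m ih =>
    intro X hfin hcard hdep
    by_cases h : ∀ Y, Y ⊂ X → ¬ M.Dep Y
    · refine ⟨X, Set.Subset.rfl, hdep, ?_⟩
      intro Y hY hYX
      obtain (h1 | rfl) := ssubset_or_eq_of_subset hYX
      · exact absurd hY (h Y h1)
      · exact le_rfl
    · push_neg at h
      obtain ⟨Y, hYX, hYdep⟩ := h
      obtain ⟨C, hCY, hC⟩ := ih Y (hfin.subset hYX.subset)
        (by have := Set.ncard_lt_ncard hYX hfin; omega) hYdep
      exact ⟨C, hCY.trans hYX.subset, hC⟩

lemma small_indep (hG : ∀ C, SGK.Circuit M C → 5 ≤ C.encard) {X : Set α}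
    (hX : X ⊆ M.E) (hcard : X.encard ≤ 4) : M.Indep X := by
  by_contra h
  have hdep : M.Dep X := Matroid.dep_iff.mpr ⟨h, hX⟩
  have hfin : X.Finite := by
    rw [← Set.encard_ne_top_iff]
    intro ht
    rw [ht] at hcard
    exact (by norm_num : ¬ ((⊤ : ℕ∞) ≤ 4)) hcard
  obtain ⟨C, hCX, hC⟩ := exists_minimal_dep M X.ncard X hfin le_rfl hdep
  have h5 := hG C hC
  have h4 : C.encard ≤ 4 := le_trans (Set.encard_mono hCX) hcard
  have : (5 : ℕ∞) ≤ 4 := le_trans h5 h4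
  norm_num at this

lemma not_mem_span_small {p n : ℕ} [Fact p.Prime] {A : Set (Fin n → ZMod p)}
    (H : ∀ s ⊆ A, s.encard ≤ 4 → LinearIndependent (ZMod p) ((↑) : s → (Fin n → ZMod p)))
    {a : Fin n → ZMod p} (ha : a ∈ A) {s : Set (Fin n → ZMod p)} (hs : s ⊆ A)
    (hcard : s.encard ≤ 3) (has : a ∉ s) :
    a ∉ Submodule.span (ZMod p) s := by
  have h4 : (insert a s).encard ≤ 4 := by
    refine le_trans (Set.encard_insert_le _ _) ?_
    calc s.encard + 1 ≤ 3 + 1 := add_le_add_left hcard 1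
      _ = 4 := by norm_num
  exact ((linearIndepOn_id_insert has).mp (H _ (Set.insert_subset ha hs) h4)).2

lemma core {p n : ℕ} [hp : Fact p.Prime] (k : ℕ) (A : Set (Fin n → ZMod p))
    (H : ∀ s ⊆ A, s.encard ≤ 4 → LinearIndependent (ZMod p) ((↑) : s → (Fin n → ZMod p)))
    (hbig : 2 * p ^ (k + 1) + k + 1 ≤ A.ncard) :
    ∀ j, j ≤ k → ∃ S : Set (Fin n → ZMod p), S ⊆ A ∧ S.Finite ∧ S.ncard = j ∧
      LinearIndependent (ZMod p) ((↑) : S → (Fin n → ZMod p)) ∧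
      ∀ a ∈ A, a ∈ Submodule.span (ZMod p) S → a ∈ S := by
  classical
  haveI : NeZero p := ⟨hp.out.ne_zero⟩
  intro j
  induction j with
  | zero =>
    intro _
    refine ⟨∅, Set.empty_subset _, Set.finite_empty, Set.ncard_empty _, ?_, ?_⟩
    · exact linearIndependent_empty _ _
    · intro a haA hsp
      rw [Submodule.span_empty, Submodule.mem_bot] at hsp
      have h1 := H {a} (Set.singleton_subset_iff.mpr haA)
        (by rw [Set.encard_singleton]; norm_num)
      exact (h1.ne_zero ⟨a, rfl⟩) (by simp [hsp])
  | succ j ih =>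
    intro hjk
    obtain ⟨S, hSA, hSfin, hScard, hSind, hSspan⟩ := ih (by omega)
    by_cases hgood : ∃ e ∈ A \ S,
        ∀ x ∈ A, x ∈ Submodule.span (ZMod p) (insert e S) → x ∈ insert e S
    · obtain ⟨e, he, hgood⟩ := hgood
      have heS : e ∉ Submodule.span (ZMod p) S := fun hmem => he.2 (hSspan e he.1 hmem)
      refine ⟨insert e S, Set.insert_subset he.1 hSA, hSfin.insert e, ?_,
        LinearIndepOn.id_insert hSind heS, hgood⟩
      rw [Set.ncard_insert_of_notMem he.2 hSfin, hScard]
    · exfalso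
      push_neg at hgood
      have key : ∀ e ∈ A \ S, ∃ c : ZMod p, ∃ z ∈ Submodule.span (ZMod p) S,
          ∃ x ∈ A, x ∉ insert e S ∧ x = c • e + z ∧ c ≠ 0 := by
        intro e he
        obtain ⟨x, hxA, hxsp, hxns⟩ := hgood e he
        obtain ⟨c, z, hz, heq⟩ := Submodule.mem_span_insert.mp hxsp
        refine ⟨c, z, hz, x, hxA, hxns, heq, ?_⟩
        intro hc0
        apply hxns
        apply Set.mem_insert_of_mem
        apply hSspan x hxA
        rw [heq, hc0, zero_smul, zero_add]
        exact hz
      choose! c z hz x hxA hxns hxeq hc0 using key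
      -- the pairing property
      have pair : ∀ e₁ ∈ A \ S, ∀ e₂ ∈ A \ S, e₁ ≠ e₂ → c e₁ = c e₂ → z e₁ = z e₂ →
          x e₁ = e₂ ∧ x e₂ = e₁ := by
        intro e₁ h₁ e₂ h₂ hne hcc hzz
        have hx1 : x e₁ = c e₁ • e₁ + z e₁ := hxeq e₁ h₁
        have hx2 : x e₂ = c e₁ • e₂ + z e₁ := by rw [hxeq e₂ h₂, ← hcc, ← hzz]
        have hc : c e₁ ≠ 0 := hc0 e₁ h₁
        have hn1 := hxns e₁ h₁
        have hn2 := hxns e₂ h₂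
        have hx1ne1 : x e₁ ≠ e₁ := fun h => hn1 (by rw [h]; exact Set.mem_insert _ _)
        have hx2ne2 : x e₂ ≠ e₂ := fun h => hn2 (by rw [h]; exact Set.mem_insert _ _)
        have hxne : x e₁ ≠ x e₂ := by
          intro h
          rw [hx1, hx2] at h
          exact hne (smul_right_injective _ hc (add_right_cancel h))
        have hpair3 : ∀ b d : Fin n → ZMod p, ({b, d} : Set (Fin n → ZMod p)).encard ≤ 3 := by
          intro b d
          refine le_trans (Set.encard_insert_le _ _) ?_
          rw [Set.encard_singleton]
          norm_num
      -- case analysis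
        by_cases hA1 : x e₁ = e₂ <;> by_cases hB1 : x e₂ = e₁
        · exact ⟨hA1, hB1⟩
        · exfalso
          have hweq : z e₁ = e₂ - c e₁ • e₁ := by
            have h := hx1
            rw [hA1] at h
            exact eq_sub_of_add_eq' h.symm
          have hmem : x e₂ ∈ Submodule.span (ZMod p) ({e₁, e₂} : Set (Fin n → ZMod p)) := by
            have hrw : x e₂ = (1 + c e₁) • e₂ - c e₁ • e₁ := by
              rw [hx2, hweq]; module
            rw [hrw]
            exact sub_mem
              (Submodule.smul_mem _ _ (Submodule.subset_span (by simp)))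
              (Submodule.smul_mem _ _ (Submodule.subset_span (by simp)))
          exact not_mem_span_small H (hxA e₂ h₂)
            (Set.insert_subset h₁.1 (Set.singleton_subset_iff.mpr h₂.1))
            (hpair3 _ _) (by simp [hB1, hx2ne2]) hmem
        · exfalso
          have hweq : z e₁ = e₁ - c e₁ • e₂ := by
            have h := hx2
            rw [hB1] at h
            exact eq_sub_of_add_eq' h.symm
          have hmem : x e₁ ∈ Submodule.span (ZMod p) ({e₁, e₂} : Set (Fin n → ZMod p)) := by
            have hrw : x e₁ = (1 + c e₁) • e₁ - c e₁ • e₂ := by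
              rw [hx1, hweq]; module
            rw [hrw]
            exact sub_mem
              (Submodule.smul_mem _ _ (Submodule.subset_span (by simp)))
              (Submodule.smul_mem _ _ (Submodule.subset_span (by simp)))
          exact not_mem_span_small H (hxA e₁ h₁)
            (Set.insert_subset h₁.1 (Set.singleton_subset_iff.mpr h₂.1))
            (hpair3 _ _) (by simp [hA1, hx1ne1]) hmem
        · exfalso
          have hmem : x e₁ ∈ Submodule.span (ZMod p)
              ({x e₂, e₁, e₂} : Set (Fin n → ZMod p)) := by
            have hrw : x e₁ = x e₂ + c e₁ • e₁ - c e₁ • e₂ := by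
              rw [hx1, hx2]; module
            rw [hrw]
            refine sub_mem (add_mem (Submodule.subset_span (by simp))
              (Submodule.smul_mem _ _ (Submodule.subset_span (by simp))))
              (Submodule.smul_mem _ _ (Submodule.subset_span (by simp)))
          have h3 : ({x e₂, e₁, e₂} : Set (Fin n → ZMod p)).encard ≤ 3 := by
            refine le_trans (Set.encard_insert_le _ _) ?_
            refine le_trans (add_le_add_left (Set.encard_insert_le _ _) 1) ?_
            rw [Set.encard_singleton]
            norm_num
          exact not_mem_span_small H (hxA e₁ h₁)
            (Set.insert_subset (hxA e₂ h₂)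
              (Set.insert_subset h₁.1 (Set.singleton_subset_iff.mpr h₂.1)))
            h3 (by simp [hxne, hx1ne1, hA1]) hmem
      -- counting
      have hDfin : (A \ S).Finite := Set.toFinite _
      set DF : Finset (Fin n → ZMod p) := hDfin.toFinset with hDF
      have hmemDF : ∀ e, e ∈ DF ↔ e ∈ A \ S := fun e => Set.Finite.mem_toFinset _
      set Φ : (Fin n → ZMod p) → ZMod p × (Fin n → ZMod p) := fun e => (c e, z e) with hΦ
      have hfib : ∀ y, (DF.filter fun e => Φ e = y).card ≤ 2 := by
        intro y
        by_contra hy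
        push_neg at hy
        obtain ⟨t, ht, htc⟩ := Finset.exists_subset_card_eq (show 3 ≤ _ from hy)
        rw [Finset.card_eq_three] at htc
        obtain ⟨a, b, d, hab, had, hbd, rfl⟩ := htc
        have hmem : ∀ u ∈ ({a, b, d} : Finset (Fin n → ZMod p)),
            u ∈ A \ S ∧ Φ u = y := by
          intro u hu
          have := ht hu
          rw [Finset.mem_filter] at this
          exact ⟨(hmemDF u).mp this.1, this.2⟩
        have ha' := hmem a (by simp)
        have hb' := hmem b (by simp)
        have hd' := hmem d (by simp)
        have hab' : Φ a = Φ b := by rw [ha'.2, hb'.2]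
        have had' : Φ a = Φ d := by rw [ha'.2, hd'.2]
        have h1 := pair a ha'.1 b hb'.1 hab
          (congrArg Prod.fst hab') (congrArg Prod.snd hab')
        have h2 := pair a ha'.1 d hd'.1 had
          (congrArg Prod.fst had') (congrArg Prod.snd had')
        exact hbd (by rw [← h1.1, h2.1])
      -- bound the image
      have hspanfin : ((Submodule.span (ZMod p) S : Submodule (ZMod p) (Fin n → ZMod p)) :
          Set (Fin n → ZMod p)).Finite := Set.toFinite _
      set T : Finset (Fin n → ZMod p) := hspanfin.toFinset with hT
      have hTcard : T.card ≤ p ^ j := by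
        haveI := hSfin.fintype
        have h1 : T.card = (Submodule.span (ZMod p) S :
            Set (Fin n → ZMod p)).ncard := (Set.ncard_eq_toFinset_card _ hspanfin).symm
        have h2 : (Submodule.span (ZMod p) S : Set (Fin n → ZMod p)).ncard =
            Nat.card (Submodule.span (ZMod p) S) := (Nat.card_coe_set_eq _).symm
        have h3 : Nat.card (Submodule.span (ZMod p) S) =
            Fintype.card (Submodule.span (ZMod p) S) := Nat.card_eq_fintype_card
        have h4 : Fintype.card (Submodule.span (ZMod p) S) =
            Fintype.card (ZMod p) ^ Module.finrank (ZMod p)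
              (Submodule.span (ZMod p) S) := Module.card_eq_pow_finrank
        have h5 : Module.finrank (ZMod p) (Submodule.span (ZMod p) S) ≤ j := by
          have := finrank_span_le_card (R := ZMod p) S
          rwa [← Set.ncard_eq_toFinset_card', hScard] at this
        rw [h1, h2, h3, h4, ZMod.card]
        exact Nat.pow_le_pow_right hp.out.pos h5
      have himage : (DF.image Φ).card ≤ p * p ^ j := by
        have hsub : DF.image Φ ⊆ Finset.univ ×ˢ T := by
          intro y hy
          obtain ⟨e, heDF, rfl⟩ := Finset.mem_image.mp hy
          have heD := (hmemDF e).mp heDF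
          rw [Finset.mem_product]
          exact ⟨Finset.mem_univ _, by rw [hT, Set.Finite.mem_toFinset]; exact hz e heD⟩
        calc (DF.image Φ).card ≤ (Finset.univ ×ˢ T).card := Finset.card_le_card hsub
          _ = Fintype.card (ZMod p) * T.card := by rw [Finset.card_product, Finset.card_univ]
          _ = p * T.card := by rw [ZMod.card]
          _ ≤ p * p ^ j := Nat.mul_le_mul_left p hTcard
      have hDcard : DF.card ≤ 2 * (p * p ^ j) := by
        calc DF.card = ∑ y ∈ DF.image Φ, (DF.filter fun e => Φ e = y).card :=
              Finset.card_eq_sum_card_image Φ DF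
          _ ≤ ∑ _y ∈ DF.image Φ, 2 := Finset.sum_le_sum fun y _ => hfib y
          _ = (DF.image Φ).card * 2 := by rw [Finset.sum_const, smul_eq_mul]
          _ ≤ (p * p ^ j) * 2 := Nat.mul_le_mul_right 2 himage
          _ = 2 * (p * p ^ j) := by ring
      have hA_le : A.ncard ≤ j + 2 * (p * p ^ j) := by
        have hcover : A ⊆ S ∪ (A \ S) := by
          intro a ha
          by_cases h : a ∈ S
          exacts [Or.inl h, Or.inr ⟨ha, h⟩]
        calc A.ncard ≤ (S ∪ (A \ S)).ncard := Set.ncard_le_ncard hcover (Set.toFinite _)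
          _ ≤ S.ncard + (A \ S).ncard := Set.ncard_union_le _ _
          _ = j + DF.card := by rw [hScard, Set.ncard_eq_toFinset_card _ hDfin]
          _ ≤ j + 2 * (p * p ^ j) := by omega
      have hpow : p * p ^ j ≤ p ^ (k + 1) := by
        rw [← pow_succ']
        exact Nat.pow_le_pow_right hp.out.pos (by omega)
      omega


end Stmt14Aux

/-- For every prime `p` and `k ≥ 1` there is `N` such that every simple
`GF(p)`-representable matroid of rank at least `N` with girth at least five contains a
rank-`k` independent flat. -/
theorem stmt_14 (p k : ℕ) [Fact p.Prime] (hk : 1 ≤ k) :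
    ∃ N : ℕ, ∀ (α : Type) (M : Matroid α), SGK.Simple M → SGK.IsRep (ZMod p) M →
      (N : ℕ∞) ≤ SGK.Rank M →
      (∀ C, SGK.Circuit M C → 5 ≤ C.encard) →
      ∃ Fl, M.IsFlat Fl ∧ SGK.rk M Fl = (k : ℕ∞) ∧ M.Indep Fl := by
  classical
  refine ⟨2 * p ^ (k + 1) + k + 1, ?_⟩
  intro α M hSimple hRep hRank hGirth
  obtain ⟨n, v, hv⟩ := hRep
  set N : ℕ := 2 * p ^ (k + 1) + k + 1 with hN
  -- obtain a large independent set
  have hlt : ((N - 1 : ℕ) : ℕ∞) < SGK.Rank M :=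
    lt_of_lt_of_le (by exact_mod_cast (by omega : N - 1 < N)) hRank
  obtain ⟨m, ⟨I₀, hI₀, hI₀E, rfl⟩, hm⟩ := lt_sSup_iff.mp hlt
  have hNle : (N : ℕ∞) ≤ I₀.encard := by
    have h1 := Order.add_one_le_of_lt hm
    have hNeq : N - 1 + 1 = N := by omega
    calc (N : ℕ∞) = ((N - 1 + 1 : ℕ) : ℕ∞) := by rw [hNeq]
      _ = ((N - 1 : ℕ) : ℕ∞) + 1 := by push_cast; ring
      _ ≤ I₀.encard := h1
  obtain ⟨J, hJsub, hJcard⟩ := Set.exists_subset_encard_eq hNle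
  have hJE : J ⊆ M.E := hJsub.trans hI₀E
  -- injectivity of v on the ground set
  have hInjE : Set.InjOn v M.E := by
    intro e he f hf hef
    by_contra hne
    have hind := (hv {e, f} (by
      rw [Set.insert_subset_iff, Set.singleton_subset_iff]; exact ⟨he, hf⟩)).mp
      (hSimple e he f hf)
    have hinj := hind.injective
    have : (⟨e, by simp⟩ : ({e, f} : Set α)) = ⟨f, by simp⟩ := by
      apply hinj
      simpa [Set.restrict] using hef
    exact hne (by simpa using congrArg Subtype.val this)
  set A : Set (Fin n → ZMod p) := v '' M.E with hA
  -- small subsets of A are linearly independent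
  have H : ∀ s ⊆ A, s.encard ≤ 4 → LinearIndependent (ZMod p) ((↑) : s → (Fin n → ZMod p)) := by
    intro s hsA hscard
    set t : Set α := M.E ∩ v ⁻¹' s with ht
    have htE : t ⊆ M.E := Set.inter_subset_left
    have himg : v '' t = s := by
      apply Set.Subset.antisymm
      · rintro y ⟨e, ⟨heE, hes⟩, rfl⟩
        exact hes
      · intro y hy
        obtain ⟨e, heE, rfl⟩ := hsA hy
        exact ⟨e, ⟨heE, hy⟩, rfl⟩
    have hinj : Set.InjOn v t := hInjE.mono htE
    have htcard : t.encard ≤ 4 := by rw [← hinj.encard_image, himg]; exact hscard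
    have hindep : M.Indep t := Stmt14Aux.small_indep hGirth htE htcard
    have hli : LinearIndependent (ZMod p) (fun x : t => v x) := (hv t htE).mp hindep
    rw [← himg]
    exact (linearIndepOn_iff_image hinj).mp hli
  -- A is large
  have hbig : N ≤ A.ncard := by
    have h1 : (v '' J).encard = (N : ℕ∞) := by rw [(hInjE.mono hJE).encard_image, hJcard]
    have h2 : (v '' J).ncard = N := by
      rw [Set.ncard_def, h1]
      rfl
    calc N = (v '' J).ncard := h2.symm
      _ ≤ A.ncard := Set.ncard_le_ncard (Set.image_mono hJE) (Set.toFinite A)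
  obtain ⟨S, hSA, hSfin, hScard, hSind, hSspan⟩ := Stmt14Aux.core k A H hbig k le_rfl
  set Fl : Set α := M.E ∩ v ⁻¹' S with hFl
  have hFlE : Fl ⊆ M.E := Set.inter_subset_left
  have himg : v '' Fl = S := by
    apply Set.Subset.antisymm
    · rintro y ⟨e, ⟨heE, hes⟩, rfl⟩
      exact hes
    · intro y hy
      obtain ⟨e, heE, rfl⟩ := hSA hy
      exact ⟨e, ⟨heE, hy⟩, rfl⟩
  have hinjFl : Set.InjOn v Fl := hInjE.mono hFlE
  have hFlIndep : M.Indep Fl := by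
    apply (hv Fl hFlE).mpr
    have : LinearIndependent (ZMod p) ((↑) : (v '' Fl) → (Fin n → ZMod p)) := by
      rw [himg]; exact hSind
    exact (linearIndepOn_iff_image hinjFl).mpr this
  have hSenc : S.encard = (k : ℕ∞) := by
    rw [← hScard, Set.ncard_def, ENat.coe_toNat (Set.encard_ne_top_iff.mpr hSfin)]
  have hFlcard : Fl.encard = (k : ℕ∞) := by rw [← hinjFl.encard_image, himg, hSenc]
  have hkey : ∀ e ∈ M.E, e ∉ Fl → M.Indep (insert e Fl) := by
    intro e heE heFl
    have hveS : v e ∉ S := fun h => heFl ⟨heE, h⟩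
    have hvesp : v e ∉ Submodule.span (ZMod p) S := fun h => hveS (hSspan _ ⟨e, heE, rfl⟩ h)
    have hEsub : insert e Fl ⊆ M.E := Set.insert_subset heE hFlE
    have hinj' : Set.InjOn v (insert e Fl) := hInjE.mono hEsub
    apply (hv _ hEsub).mpr
    have h2 : LinearIndependent (ZMod p) ((↑) : (v '' insert e Fl) → (Fin n → ZMod p)) := by
      rw [Set.image_insert_eq, himg]
      exact LinearIndepOn.id_insert hSind hvesp
    exact (linearIndepOn_iff_image hinj').mpr h2
  have hFlat : M.IsFlat Fl := by
    rw [Matroid.isFlat_iff]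
    refine ⟨?_, hFlE⟩
    intro I X hIF hIX
    have hIeq : I = Fl := hIF.eq_of_subset_indep hFlIndep hIF.subset Set.Subset.rfl
    subst hIeq
    intro y hyX
    have hy := hIX.subset_closure hyX
    rcases (hFlIndep.mem_closure_iff).mp hy with hdep | hmem
    · by_contra hyFl
      have hyE : y ∈ M.E := hdep.subset_ground (Set.mem_insert _ _)
      exact (Matroid.dep_iff.mp hdep).1 (hkey y hyE hyFl)
    · exact hmem
  have hrk : SGK.rk M Fl = (k : ℕ∞) := by
    apply le_antisymm
    · apply sSup_le
      rintro m ⟨I, hI, hIFl, rfl⟩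
      rw [← hFlcard]
      exact Set.encard_mono hIFl
    · exact le_sSup ⟨Fl, hFlIndep, Set.Subset.rfl, hFlcard⟩
  exact ⟨Fl, hFlat, hrk, hFlIndep⟩
end

section
/- Let p be a prime and let M be a GF(p)-representable matroid with a rank-(k−1) flat C spanned by a basis {e_1,…,e_{k−1}}, and an element f ∉ cl(C), such that for every e ∈ C and every g ∉ C the line spanned by {e,g} has exactly p+1 points. Then the set S = cl({f, e_1, …, e_{k−1}}) \ C has exactly p^{k−1} elements and M|S is isomorphic to AG(k−1,p). -/
open Matroid Set

section Helpers

open Matroid Set Submodule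

variable {α : Type*}

lemma SGK.line_full {F : Type*} [Field F] [Fintype F] {V : Type*} [AddCommGroup V] [Module F V]
    {β : Type*} (v : β → V) (L : Set β) (a b : V)
    (hab : ∀ s t : F, s • a + t • b = 0 → s = 0 ∧ t = 0)
    (hmem : ∀ x ∈ L, v x ∈ Submodule.span F {a, b})
    (hnz : ∀ x ∈ L, v x ≠ 0)
    (hpair : ∀ x ∈ L, ∀ y ∈ L, x ≠ y → ∀ c : F, v y ≠ c • v x)
    (hcard : L.encard = ((Fintype.card F + 1 : ℕ) : ℕ∞)) :
    ∀ t ∈ Submodule.span F {a, b}, t ≠ 0 → ∃ x ∈ L, ∃ c : F, c ≠ 0 ∧ t = c • v x := by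
  classical
  set R : Set V := insert b ((fun s : F => a + s • b) '' univ) with hRdef
  have hinj : Set.InjOn (fun s : F => a + s • b) univ := by
    intro s _ s' _ h
    simp only at h
    have h2 : s • b = s' • b := add_left_cancel h
    have h3 : (0 : F) • a + (s - s') • b = 0 := by
      rw [zero_smul, sub_smul, h2]; abel
    have := (hab _ _ h3).2
    exact sub_eq_zero.mp this
  have hbR : b ∉ (fun s : F => a + s • b) '' univ := by
    rintro ⟨s, -, hs⟩
    simp only at hs
    have h3 : (1 : F) • a + (s - 1) • b = 0 := by
      rw [one_smul, sub_smul, one_smul]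
      have : a + (s • b - b) = (a + s • b) - b := by abel
      rw [this, hs, sub_self]
    exact one_ne_zero (hab _ _ h3).1
  have hRfin : R.Finite := (Set.finite_univ.image _).insert b
  have hRcard : R.encard = ((Fintype.card F + 1 : ℕ) : ℕ∞) := by
    rw [hRdef, Set.encard_insert_of_notMem hbR, hinj.encard_image, Set.encard_univ]
    simp [ENat.card_eq_coe_fintype_card]
  have hRrep : ∀ y ∈ Submodule.span F {a, b}, y ≠ 0 → ∃ r ∈ R, ∃ c : F, c ≠ 0 ∧ y = c • r := by
    intro y hy hy0
    obtain ⟨s, t, hst⟩ := Submodule.mem_span_pair.mp hy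
    by_cases hs : s = 0
    · refine ⟨b, Set.mem_insert _ _, t, fun ht => hy0 ?_, ?_⟩
      · rw [← hst, hs, ht, zero_smul, zero_smul, add_zero]
      · rw [← hst, hs, zero_smul, zero_add]
    · refine ⟨a + (t / s) • b, Set.mem_insert_of_mem _ ⟨t / s, Set.mem_univ _, rfl⟩, s, hs, ?_⟩
      rw [smul_add, smul_smul, mul_div_cancel₀ _ hs, hst]
  set ρ : β → V := fun x =>
    if h : ∃ r ∈ R, ∃ c : F, c ≠ 0 ∧ v x = c • r then h.choose else b with hρdef
  have hρ : ∀ x ∈ L, ρ x ∈ R ∧ ∃ c : F, c ≠ 0 ∧ v x = c • ρ x := by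
    intro x hx
    have h : ∃ r ∈ R, ∃ c : F, c ≠ 0 ∧ v x = c • r := hRrep _ (hmem x hx) (hnz x hx)
    simp only [hρdef, dif_pos h]
    exact ⟨h.choose_spec.1, h.choose_spec.2⟩
  have hρinj : Set.InjOn ρ L := by
    intro x hx y hy hxy
    by_contra hne
    obtain ⟨-, c, hc, hvx⟩ := hρ x hx
    obtain ⟨-, c', hc', hvy⟩ := hρ y hy
    refine hpair x hx y hy hne (c' * c⁻¹) ?_
    rw [hvy, hvx, ← hxy, smul_smul, mul_assoc, inv_mul_cancel₀ hc, mul_one]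
  have himg : ρ '' L = R := by
    refine hRfin.eq_of_subset_of_encard_le' ?_ ?_
    · rintro - ⟨x, hx, rfl⟩; exact (hρ x hx).1
    · rw [hρinj.encard_image, hRcard, hcard]
  intro t ht ht0
  obtain ⟨r, hr, d, hd, htd⟩ := hRrep t ht ht0
  rw [← himg] at hr
  obtain ⟨x, hx, rfl⟩ := hr
  obtain ⟨-, c, hc, hvx⟩ := hρ x hx
  exact ⟨x, hx, d * c⁻¹, mul_ne_zero hd (inv_ne_zero hc), by
    rw [htd, hvx, smul_smul, mul_assoc, inv_mul_cancel₀ hc, mul_one]⟩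

lemma SGK.rep_closure_iff_indep {F : Type*} [Field F] {n : ℕ} (M : Matroid α) (v : α → Fin n → F)
    (hv : ∀ I ⊆ M.E, (M.Indep I ↔ LinearIndependent F (I.restrict v)))
    {I : Set α} (hI : M.Indep I) {x : α} (hx : x ∈ M.E) :
    x ∈ M.closure I ↔ v x ∈ Submodule.span F (v '' I) := by
  by_cases hxI : x ∈ I
  · exact iff_of_true (M.subset_closure I hI.subset_ground hxI)
      (subset_span (mem_image_of_mem v hxI))
  · rw [hI.mem_closure_iff_of_notMem hxI]
    have hIli : LinearIndependent F (I.restrict v) := (hv I hI.subset_ground).mp hI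
    constructor
    · intro hdep
      by_contra hnot
      have hli : LinearIndependent F fun z : ↥(insert x I) => v z :=
        (linearIndepOn_insert hxI).mpr ⟨hIli, hnot⟩
      exact (Matroid.dep_iff.mp hdep).1
        ((hv _ (insert_subset hx hI.subset_ground)).mpr hli)
    · intro hmem
      rw [Matroid.dep_iff]
      refine ⟨fun hind => ?_, insert_subset hx hI.subset_ground⟩
      have := (hv _ (insert_subset hx hI.subset_ground)).mp hind
      exact ((linearIndepOn_insert hxI).mp this).2 hmem

lemma SGK.rep_closure_iff {F : Type*} [Field F] {n : ℕ} (M : Matroid α) (v : α → Fin n → F)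
    (hv : ∀ I ⊆ M.E, (M.Indep I ↔ LinearIndependent F (I.restrict v)))
    {X : Set α} (hX : X ⊆ M.E) {x : α} (hx : x ∈ M.E) :
    x ∈ M.closure X ↔ v x ∈ Submodule.span F (v '' X) := by
  obtain ⟨I, hI⟩ := M.exists_isBasis X hX
  have h1 : Submodule.span F (v '' X) = Submodule.span F (v '' I) := by
    refine le_antisymm ?_ (span_mono (image_mono hI.subset))
    rw [span_le]
    rintro - ⟨y, hy, rfl⟩
    exact (SGK.rep_closure_iff_indep M v hv hI.indep (hX hy)).mp (hI.subset_closure hy)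
  rw [← hI.closure_eq_closure, h1]
  exact SGK.rep_closure_iff_indep M v hv hI.indep hx

lemma SGK.simple_indep_singleton {M : Matroid α} (hS : SGK.Simple M) {x : α} (hx : x ∈ M.E) :
    M.Indep {x} := by
  have := hS x hx x hx
  rwa [Set.pair_eq_singleton] at this

lemma SGK.rk_singleton {M : Matroid α} (hS : SGK.Simple M) {x : α} (hx : x ∈ M.E) :
    SGK.rk M {x} = 1 := by
  have hx1 : M.Indep {x} := SGK.simple_indep_singleton hS hx
  have hset : {n : ℕ∞ | ∃ I, M.Indep I ∧ I ⊆ {x} ∧ I.encard = n} = {0, 1} := by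
    ext n
    constructor
    · rintro ⟨I, hI, hIx, rfl⟩
      rcases Set.subset_singleton_iff_eq.mp hIx with rfl | rfl
      · left; simp
      · right; simp
    · rintro (rfl | rfl)
      · exact ⟨∅, M.empty_indep, Set.empty_subset _, by simp⟩
      · exact ⟨{x}, hx1, subset_rfl, by simp⟩
  rw [SGK.rk, hset, sSup_pair]
  simp

lemma SGK.points_eq_singletons {M : Matroid α} (hS : SGK.Simple M) {X : Set α} (hX : X ⊆ M.E) :
    SGK.points M X = (fun x => ({x} : Set α)) '' X := by
  ext P
  constructor
  · rintro ⟨hflat, hPX, hrk⟩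
    obtain ⟨x, hx⟩ : P.Nonempty := by
      rw [Set.nonempty_iff_ne_empty]
      rintro rfl
      have h0 : {n : ℕ∞ | ∃ I, M.Indep I ∧ I ⊆ (∅ : Set α) ∧ I.encard = n} = {0} := by
        ext n
        constructor
        · rintro ⟨I, -, hI, rfl⟩
          simp [Set.subset_empty_iff.mp hI]
        · rintro rfl
          exact ⟨∅, M.empty_indep, subset_rfl, by simp⟩
      rw [SGK.rk, h0, sSup_singleton] at hrk
      simp at hrk
    refine ⟨x, hPX hx, ?_⟩
    have hPx : P = {x} := by
      apply Set.eq_singleton_iff_unique_mem.mpr ⟨hx, fun y hy => ?_⟩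
      by_contra hne
      have h2 : (2 : ℕ∞) ≤ SGK.rk M P :=
        le_sSup ⟨{y, x}, hS y (hX (hPX hy)) x (hX (hPX hx)),
          Set.pair_subset hy hx, Set.encard_pair hne⟩
      rw [hrk] at h2
      norm_num at h2
    exact hPx.symm
  · rintro ⟨x, hx, rfl⟩
    have hxE : x ∈ M.E := hX hx
    have hx1 : M.Indep {x} := SGK.simple_indep_singleton hS hxE
    have hcl : M.closure {x} = {x} := by
      refine subset_antisymm ?_ (M.subset_closure _ (Set.singleton_subset_iff.mpr hxE))
      intro y hy
      have h' := hx1.mem_closure_iff'.mp hy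
      by_cases hyx : y = x
      · simp [hyx]
      · exact h'.2 (hS y h'.1 x hxE)
    refine ⟨?_, Set.singleton_subset_iff.mpr hx, SGK.rk_singleton hS hxE⟩
    refine ⟨fun I X hI hIX => ?_, Set.singleton_subset_iff.mpr hxE⟩
    have h1 := hIX.subset_closure
    rwa [hI.closure_eq_closure, hcl] at h1

lemma SGK.points_encard {M : Matroid α} (hS : SGK.Simple M) {X : Set α} (hX : X ⊆ M.E) :
    (SGK.points M X).encard = X.encard := by
  rw [SGK.points_eq_singletons hS hX]
  exact Set.InjOn.encard_image fun a _ b _ h => Set.singleton_eq_singleton_iff.mp h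

end Helpers

/-- If `C` is a rank-`(k-1)` flat of a simple `GF(p)`-representable matroid spanned by a
basis `e_1, …, e_{k-1}`, `f ∉ C` is a ground element, and every line joining a point of `C`
to a point outside `C` has exactly `p + 1` points, then
`S = cl({f, e_1, …, e_{k-1}}) \ C` has exactly `p^{k-1}` elements and
`M|S ≅ AG(k-1, p)`. -/
theorem stmt_19 {α : Type*} (p k : ℕ) [Fact p.Prime] (hk : 1 ≤ k) (M : Matroid α)
    (hS : SGK.Simple M) (hR : SGK.IsRep (ZMod p) M)
    (C : Set α) (hC : M.IsFlat C)
    (b : Fin (k - 1) → α) (hb : Function.Injective b)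
    (hbasis : M.IsBasis (Set.range b) C)
    (f : α) (hf : f ∈ M.E) (hfC : f ∉ C)
    (hlines : ∀ e ∈ C, ∀ g ∈ M.E, g ∉ C →
      (SGK.points M (M.closure {e, g})).encard = ((p + 1 : ℕ) : ℕ∞)) :
    (M.closure (insert f (Set.range b)) \ C).encard = ((p ^ (k - 1) : ℕ) : ℕ∞) ∧
    SGK.IsAG (ZMod p) (k - 1) (M ↾ (M.closure (insert f (Set.range b)) \ C)) := by
  classical
  obtain ⟨n, v, hv⟩ := hR
  haveI : NeZero p := ⟨(Fact.out : p.Prime).pos.ne'⟩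
  have hCE : C ⊆ M.E := hC.subset_ground
  have hbE : Set.range b ⊆ M.E := fun x hx => hCE (hbasis.subset hx)
  -- nonzero vectors
  have hnz : ∀ x ∈ M.E, v x ≠ 0 := by
    intro x hx
    have hx1 : M.Indep {x} := SGK.simple_indep_singleton hS hx
    have := (hv {x} (Set.singleton_subset_iff.mpr hx)).mp hx1
    exact this.ne_zero ⟨x, rfl⟩
  -- non-proportional vectors
  have hpair : ∀ x ∈ M.E, ∀ y ∈ M.E, x ≠ y → ∀ c : ZMod p, v y ≠ c • v x := by
    intro x hx y hy hxy c hc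
    have hyx : ({y, x} : Set α) ⊆ M.E := Set.pair_subset hy hx
    have hind := (hv _ hyx).mp (hS y hy x hx)
    have hnotin : y ∉ ({x} : Set α) := by simp [Ne.symm hxy]
    have hsp := ((linearIndepOn_insert hnotin).mp hind).2
    apply hsp
    rw [Set.image_singleton]
    exact Submodule.mem_span_singleton.mpr ⟨c, hc.symm⟩
  have hab : ∀ x ∈ M.E, ∀ y ∈ M.E, x ≠ y → ∀ s t : ZMod p,
      s • v x + t • v y = 0 → s = 0 ∧ t = 0 := by
    intro x hx y hy hxy s t h
    by_cases ht : t = 0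
    · subst ht
      rw [zero_smul, add_zero] at h
      rcases smul_eq_zero.mp h with h' | h'
      · exact ⟨h', rfl⟩
      · exact absurd h' (hnz x hx)
    · exfalso
      apply hpair x hx y hy hxy (-(t⁻¹ * s))
      have h1 : t • v y = -(s • v x) := by
        rw [add_comm] at h
        rwa [← eq_neg_iff_add_eq_zero] at h
      have h2 := congrArg (fun z => t⁻¹ • z) h1
      simp only [smul_smul, inv_mul_cancel₀ ht, one_smul, smul_neg] at h2
      rw [h2, neg_smul]
  -- spans
  set W0 : Submodule (ZMod p) (Fin n → ZMod p) :=
    Submodule.span (ZMod p) (v '' Set.range b) with hW0def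
  set W : Submodule (ZMod p) (Fin n → ZMod p) :=
    Submodule.span (ZMod p) (v '' insert f (Set.range b)) with hWdef
  have hCcl : M.closure (Set.range b) = C := hbasis.closure_eq_closure.trans hC.closure
  have hCspan : ∀ x ∈ M.E, (x ∈ C ↔ v x ∈ W0) := by
    intro x hx
    rw [← hCcl]
    exact SGK.rep_closure_iff M v hv hbE hx
  have hfE' : insert f (Set.range b) ⊆ M.E := Set.insert_subset hf hbE
  have hSE : M.closure (insert f (Set.range b)) \ C ⊆ M.E :=
    fun x hx => M.closure_subset_ground _ hx.1
  have hSspan : ∀ x ∈ M.E,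
      (x ∈ M.closure (insert f (Set.range b)) \ C ↔ v x ∈ W ∧ v x ∉ W0) := by
    intro x hx
    rw [Set.mem_diff, SGK.rep_closure_iff M v hv hfE' hx, hCspan x hx]
  have hfW0 : v f ∉ W0 := fun h => hfC ((hCspan f hf).mpr h)
  have hbli : LinearIndependent (ZMod p) (fun i : Fin (k-1) => v (b i)) := by
    have h1 := (hv _ hbE).mp hbasis.indep
    exact h1.comp (fun i => ⟨b i, Set.mem_range_self i⟩)
      (fun i j hij => hb (congrArg Subtype.val hij))
  have hrangevb : Set.range (fun i : Fin (k-1) => v (b i)) = v '' Set.range b :=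
    Set.range_comp v b
  set u : Option (Fin (k-1)) → (Fin n → ZMod p) :=
    fun o => Option.elim o (v f) (fun i => v (b i)) with hudef
  have hu : LinearIndependent (ZMod p) u := by
    rw [linearIndependent_option]
    constructor
    · exact hbli
    · show v f ∉ Submodule.span (ZMod p) (Set.range (u ∘ some))
      have : Set.range (u ∘ some) = v '' Set.range b := hrangevb
      rw [this]
      exact hfW0
  have hrangeu : v '' insert f (Set.range b) = Set.range u := by
    rw [Set.image_insert_eq, ← hrangevb]
    ext z
    constructor
    · rintro (rfl | ⟨i, rfl⟩)
      · exact ⟨none, rfl⟩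
      · exact ⟨some i, rfl⟩
    · rintro ⟨o, rfl⟩
      cases o with
      | none => exact Set.mem_insert _ _
      | some i => exact Set.mem_insert_of_mem _ ⟨i, rfl⟩
  set t : (Fin (k-1) → ZMod p) → (Fin n → ZMod p) :=
    fun w => v f + ∑ i, w i • v (b i) with htdef
  have hvfW : v f ∈ W := Submodule.subset_span (Set.mem_image_of_mem v (Set.mem_insert f _))
  have hvbW : ∀ i, v (b i) ∈ W := fun i =>
    Submodule.subset_span (Set.mem_image_of_mem v (Set.mem_insert_of_mem f (Set.mem_range_self i)))
  have hvbW0 : ∀ i, v (b i) ∈ W0 := fun i =>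
    Submodule.subset_span (Set.mem_image_of_mem v (Set.mem_range_self i))
  have htW : ∀ w, t w ∈ W := fun w =>
    add_mem hvfW (Submodule.sum_mem _ fun i _ => Submodule.smul_mem _ _ (hvbW i))
  have htW0 : ∀ w, t w ∉ W0 := by
    intro w hmem
    apply hfW0
    have h1 : t w = v f + ∑ i, w i • v (b i) := rfl
    have h2 : v f = t w - ∑ i, w i • v (b i) := by rw [h1]; abel
    rw [h2]
    exact sub_mem hmem (Submodule.sum_mem _ fun i _ => Submodule.smul_mem _ _ (hvbW0 i))
  have ht0 : ∀ w, t w ≠ 0 := by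
    intro w h
    exact htW0 w (by rw [h]; exact W0.zero_mem)
  have huniq : ∀ (c c' : ZMod p) (w w' : Fin (k-1) → ZMod p), c ≠ 0 → c' ≠ 0 →
      c • t w = c' • t w' → c = c' ∧ w = w' := by
    intro c c' w w' hc hc' h
    have hexp : ∀ (w'' : Fin (k-1) → ZMod p) (cc : ZMod p),
        cc • t w'' = cc • v f + ∑ i, (cc * w'' i) • v (b i) := by
      intro w'' cc
      have h1 : t w'' = v f + ∑ i, w'' i • v (b i) := rfl
      rw [h1, smul_add, Finset.smul_sum]
      congr 1
      exact Finset.sum_congr rfl fun i _ => smul_smul _ _ _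
    set d : Option (Fin (k-1)) → ZMod p :=
      fun o => Option.elim o (c - c') (fun i => c * w i - c' * w' i) with hddef
    have hsum : ∑ o : Option (Fin (k-1)), d o • u o = 0 := by
      rw [Fintype.sum_option]
      show (c - c') • v f + ∑ i, (c * w i - c' * w' i) • v (b i) = 0
      rw [sub_smul, Finset.sum_congr rfl fun i (_ : i ∈ Finset.univ) => sub_smul (c * w i) (c' * w' i) (v (b i)),
        Finset.sum_sub_distrib]
      have hre : (c • v f - c' • v f) + (∑ i, (c * w i) • v (b i) - ∑ i, (c' * w' i) • v (b i))
          = (c • v f + ∑ i, (c * w i) • v (b i)) - (c' • v f + ∑ i, (c' * w' i) • v (b i)) := by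
        abel
      rw [hre, ← hexp w c, ← hexp w' c', h, sub_self]
    have hz := Fintype.linearIndependent_iff.mp hu d hsum
    have hce : c = c' := sub_eq_zero.mp (hz none)
    refine ⟨hce, funext fun i => ?_⟩
    have h6 : c * w i = c' * w' i := sub_eq_zero.mp (hz (some i))
    rw [← hce] at h6
    exact mul_left_cancel₀ hc h6
  have hdec : ∀ y : Fin n → ZMod p, y ∈ W → y ∉ W0 → ∃ (w : Fin (k-1) → ZMod p) (c : ZMod p), c ≠ 0 ∧ y = c • t w := by
    intro y hyW hyW0
    rw [hWdef] at hyW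
    have hyW' : y ∈ Submodule.span (ZMod p) (Set.range u) := by rwa [hrangeu] at hyW
    obtain ⟨cf, hcf⟩ := (Submodule.mem_span_range_iff_exists_fun (ZMod p)).mp hyW'
    rw [Fintype.sum_option] at hcf
    have hc0 : cf none ≠ 0 := by
      intro h0
      apply hyW0
      have : u none = v f := rfl
      rw [← hcf, h0, zero_smul, zero_add]
      exact Submodule.sum_mem _ fun i _ => Submodule.smul_mem _ _ (hvbW0 i)
    refine ⟨fun i => cf (some i) / cf none, cf none, hc0, ?_⟩
    have h1 : t (fun i => cf (some i) / cf none)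
        = v f + ∑ i, (cf (some i) / cf none) • v (b i) := rfl
    rw [h1, smul_add, Finset.smul_sum, ← hcf]
    congr 1
    refine Finset.sum_congr rfl fun i _ => ?_
    rw [smul_smul, mul_comm, div_mul_cancel₀ _ hc0]
    rfl
  have hginS : ∀ g ∈ M.E, ∀ c : ZMod p, c ≠ 0 → ∀ w, v g = c • t w →
      g ∈ M.closure (insert f (Set.range b)) \ C := by
    intro g hg c hc w hvg
    refine (hSspan g hg).mpr ⟨?_, ?_⟩
    · rw [hvg]; exact Submodule.smul_mem _ _ (htW w)
    · intro hmem
      apply htW0 w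
      have h1 : t w = c⁻¹ • v g := by rw [hvg, smul_smul, inv_mul_cancel₀ hc, one_smul]
      rw [h1]
      exact Submodule.smul_mem _ _ hmem
  have hlines' : ∀ e ∈ C, ∀ g ∈ M.E, g ∉ C →
      (M.closure {e, g}).encard = ((Fintype.card (ZMod p) + 1 : ℕ) : ℕ∞) := by
    intro e he g hg hgC
    have h1 := hlines e he g hg hgC
    rw [SGK.points_encard hS (M.closure_subset_ground _)] at h1
    rw [h1, ZMod.card]
  have hfull : ∀ e ∈ C, ∀ g ∈ M.E, g ∉ C →
      ∀ y ∈ Submodule.span (ZMod p) {v e, v g}, y ≠ 0 →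
      ∃ x ∈ M.E, ∃ c : ZMod p, c ≠ 0 ∧ y = c • v x := by
    intro e he g hg hgC y hy hy0
    have heE : e ∈ M.E := hCE he
    have heg : e ≠ g := fun h => hgC (h ▸ he)
    have hL : M.closure {e, g} ⊆ M.E := M.closure_subset_ground _
    have hegE : ({e, g} : Set α) ⊆ M.E := Set.pair_subset heE hg
    obtain ⟨x, hxL, c, hc, hxc⟩ := SGK.line_full v (M.closure {e, g}) (v e) (v g)
      (hab e heE g hg heg)
      (fun x hx => by
        have hh := (SGK.rep_closure_iff M v hv hegE (hL hx)).mp hx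
        rwa [Set.image_pair] at hh)
      (fun x hx => hnz x (hL hx))
      (fun x hx y' hy' hxy c => hpair x (hL hx) y' (hL hy') hxy c)
      (hlines' e he g hg hgC) y hy hy0
    exact ⟨x, hL hxL, c, hc, hxc⟩
  have hkey : ∀ s : Finset (Fin (k-1)), ∀ w : Fin (k-1) → ZMod p,
      (∀ i, w i ≠ 0 → i ∈ s) → ∃ g ∈ M.E, ∃ c : ZMod p, c ≠ 0 ∧ v g = c • t w := by
    intro s
    induction s using Finset.induction_on with
    | empty =>
      intro w hw
      have hw0 : w = fun _ => 0 :=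
        funext fun i => by_contra fun h => (Finset.notMem_empty i) (hw i h)
      refine ⟨f, hf, 1, one_ne_zero, ?_⟩
      have h1 : t w = v f + ∑ i, w i • v (b i) := rfl
      rw [one_smul, h1, hw0]
      simp
    | @insert j s hj ih =>
      intro w hw
      by_cases hwj : w j = 0
      · refine ih w fun i hi => ?_
        rcases Finset.mem_insert.mp (hw i hi) with rfl | h
        · exact absurd hwj hi
        · exact h
      · set w' : Fin (k-1) → ZMod p := Function.update w j 0 with hw'def
        obtain ⟨g', hg', c', hc', hvg'⟩ := ih w' (fun i hi => by
          by_cases hij : i = j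
          · subst hij
            rw [hw'def, Function.update_self] at hi
            exact absurd rfl hi
          · rw [hw'def, Function.update_of_ne hij] at hi
            rcases Finset.mem_insert.mp (hw i hi) with h | h
            · exact absurd h hij
            · exact h)
        have hg'S := hginS g' hg' c' hc' w' hvg'
        have hg'C : g' ∉ C := hg'S.2
        have hbjC : b j ∈ C := hbasis.subset (Set.mem_range_self j)
        have hsplit : t w = t w' + w j • v (b j) := by
          have h1 : t w = v f + ∑ i, w i • v (b i) := rfl
          have h2 : t w' = v f + ∑ i, w' i • v (b i) := rfl
          have h3 : ∀ i, w i • v (b i)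
              = w' i • v (b i) + (if i = j then w j • v (b j) else 0) := by
            intro i
            by_cases hij : i = j
            · subst hij
              rw [hw'def, Function.update_self, if_pos rfl, zero_smul, zero_add]
            · rw [hw'def, Function.update_of_ne hij, if_neg hij, add_zero]
          rw [h1, h2, Finset.sum_congr rfl fun i (_ : i ∈ Finset.univ) => h3 i,
            Finset.sum_add_distrib, Finset.sum_ite_eq' Finset.univ j
              (fun _ => w j • v (b j))]
          simp only [Finset.mem_univ, if_true]
          abel
        have htww' : t w' = c'⁻¹ • v g' := by
          rw [hvg', smul_smul, inv_mul_cancel₀ hc', one_smul]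
        have htmem : t w ∈ Submodule.span (ZMod p) {v (b j), v g'} := by
          apply Submodule.mem_span_pair.mpr
          refine ⟨w j, c'⁻¹, ?_⟩
          rw [← htww', hsplit]
          abel
        obtain ⟨x, hx, c, hc, hxc⟩ :=
          hfull (b j) hbjC g' hg' hg'C (t w) htmem (ht0 w)
        refine ⟨x, hx, c⁻¹, inv_ne_zero hc, ?_⟩
        rw [hxc, smul_smul, inv_mul_cancel₀ hc, one_smul]
  have hsurj : ∀ w : Fin (k-1) → ZMod p, ∃ g ∈ M.E, ∃ c : ZMod p, c ≠ 0 ∧ v g = c • t w :=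
    fun w => hkey Finset.univ w (fun i _ => Finset.mem_univ i)
  set φ : α → (Fin (k-1) → ZMod p) := fun x =>
    if h : ∃ (w : Fin (k-1) → ZMod p) (c : ZMod p), c ≠ 0 ∧ v x = c • t w then h.choose else 0 with hφdef
  have hφS : ∀ g ∈ M.closure (insert f (Set.range b)) \ C,
      ∃ c : ZMod p, c ≠ 0 ∧ v g = c • t (φ g) := by
    intro g hg
    have hgE := hSE hg
    have hmem := (hSspan g hgE).mp hg
    have h : ∃ (w : Fin (k-1) → ZMod p) (c : ZMod p), c ≠ 0 ∧ v g = c • t w := hdec (v g) hmem.1 hmem.2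
    have hgoal : φ g = h.choose := by
      rw [hφdef]
      exact dif_pos h
    rw [hgoal]
    exact h.choose_spec
  have hφw : ∀ g ∈ M.E, ∀ c : ZMod p, c ≠ 0 → ∀ w, v g = c • t w → φ g = w := by
    intro g hg c hc w hvg
    have h : ∃ (w : Fin (k-1) → ZMod p) (c : ZMod p), c ≠ 0 ∧ v g = c • t w := ⟨w, c, hc, hvg⟩
    have hφg : φ g = h.choose := by
      rw [hφdef]
      exact dif_pos h
    obtain ⟨c'', hc'', hh⟩ := h.choose_spec
    have hcw := huniq c c'' w h.choose hc hc'' (hvg.symm.trans hh)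
    rw [hφg]
    exact hcw.2.symm
  have hφinj : Set.InjOn φ (M.closure (insert f (Set.range b)) \ C) := by
    intro x hx y hy hxy
    by_contra hne
    obtain ⟨cx, hcx, hvx⟩ := hφS x hx
    obtain ⟨cy, hcy, hvy⟩ := hφS y hy
    have htx : t (φ x) = cx⁻¹ • v x := by
      rw [hvx, smul_smul, inv_mul_cancel₀ hcx, one_smul]
    apply hpair x (hSE hx) y (hSE hy) hne (cy * cx⁻¹)
    calc v y = cy • t (φ y) := hvy
      _ = cy • (cx⁻¹ • v x) := by rw [← hxy, htx]
      _ = (cy * cx⁻¹) • v x := smul_smul _ _ _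
  have hφsurj : ∀ w, ∃ g ∈ M.closure (insert f (Set.range b)) \ C, φ g = w := by
    intro w
    obtain ⟨g, hg, c, hc, hvg⟩ := hsurj w
    exact ⟨g, hginS g hg c hc w hvg, hφw g hg c hc w hvg⟩
  -- the dual functional
  obtain ⟨lam, hlamf, hlamb⟩ : ∃ lam : (Fin n → ZMod p) →ₗ[ZMod p] ZMod p,
      lam (v f) = 1 ∧ ∀ i, lam (v (b i)) = 0 := by
    have hs : LinearIndepOn (ZMod p) id (Set.range u) :=
      (linearIndepOn_id_range_iff hu.injective).mpr hu
    let B := Module.Basis.extend hs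
    have hmem : ∀ o : Option (Fin (k-1)), u o ∈ hs.extend (Set.subset_univ _) :=
      fun o => hs.subset_extend _ ⟨o, rfl⟩
    set jn : ↥(hs.extend (Set.subset_univ _)) := ⟨u none, hmem none⟩ with hjn
    refine ⟨B.coord jn, ?_, fun i => ?_⟩
    · have h1 : B jn = u none := Module.Basis.extend_apply_self hs _
      rw [Module.Basis.coord_apply]
      show (B.repr (u none)) jn = 1
      rw [← h1, Module.Basis.repr_self]
      simp
    · set ji : ↥(hs.extend (Set.subset_univ _)) := ⟨u (some i), hmem (some i)⟩ with hji
      have h1 : B ji = u (some i) := Module.Basis.extend_apply_self hs _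
      show (B.repr (u (some i))) jn = 0
      rw [← h1, Module.Basis.repr_self]
      rw [Finsupp.single_eq_of_ne]
      intro h
      have h2 : u (some i) = u none := (congrArg Subtype.val h).symm
      exact Option.some_ne_none i (hu.injective h2)
  have hlamt : ∀ w, lam (t w) = 1 := by
    intro w
    have h1 : t w = v f + ∑ i, w i • v (b i) := rfl
    rw [h1, map_add, map_sum, hlamf]
    simp [map_smul, hlamb]
  -- sum expansion
  have hcomb : ∀ (I : Set α) (s : Finset ↥I) (g : ↥I → ZMod p),
      ∑ e ∈ s, g e • t (φ ↑e) = (∑ e ∈ s, g e) • v f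
        + ∑ i, (∑ e ∈ s, g e * φ (↑e : α) i) • v (b i) := by
    intro I s g
    have h1 : ∀ e : ↥I, g e • t (φ ↑e)
        = g e • v f + ∑ i, (g e * φ (↑e : α) i) • v (b i) := by
      intro e
      have h2 : t (φ ↑e) = v f + ∑ i, φ (↑e : α) i • v (b i) := rfl
      rw [h2, smul_add, Finset.smul_sum]
      congr 1
      exact Finset.sum_congr rfl fun i _ => smul_smul _ _ _
    rw [Finset.sum_congr rfl fun e (_ : e ∈ s) => h1 e, Finset.sum_add_distrib,
      ← Finset.sum_smul]
    congr 1
    rw [Finset.sum_comm]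
    exact Finset.sum_congr rfl fun i _ => (Finset.sum_smul).symm
  -- the main equivalence
  have hmain : ∀ I : Set α, I ⊆ M.closure (insert f (Set.range b)) \ C →
      (M.Indep I ↔ AffineIndependent (ZMod p) (I.restrict φ)) := by
    intro I hIS
    have hIE : I ⊆ M.E := hIS.trans hSE
    have hcf : ∀ x : ↥I, ∃ c : ZMod p, c ≠ 0 ∧ v ↑x = c • t (φ ↑x) :=
      fun x => hφS ↑x (hIS x.2)
    choose cc hcc0 hccv using hcf
    have htφ : ∀ x : ↥I, t (φ ↑x) = (cc x)⁻¹ • v ↑x := fun x => by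
      rw [hccv x, smul_smul, inv_mul_cancel₀ (hcc0 x), one_smul]
    rw [hv I hIE]
    constructor
    · intro hli
      have hli2 : LinearIndependent (ZMod p) (fun x : ↥I => t (φ ↑x)) := by
        have hfun : (fun x : ↥I => t (φ (↑x : α)))
            = fun x : ↥I => ((Units.mk0 (cc x) (hcc0 x))⁻¹ : (ZMod p)ˣ) • (I.restrict v) x := by
          funext x
          rw [htφ x]
          simp [Units.smul_def, Units.val_inv_eq_inv_val]
          rfl
        rw [hfun]
        exact hli.units_smul (fun x => (Units.mk0 (cc x) (hcc0 x))⁻¹)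
      rw [affineIndependent_iff]
      intro s wts hw0 hwsum
      refine fun e he => linearIndependent_iff'.mp hli2 s wts ?_ e he
      rw [hcomb I s wts, hw0, zero_smul, zero_add]
      have hz : ∀ i, (∑ e ∈ s, wts e * φ (↑e : α) i) = 0 := by
        intro i
        have hcf2 := congrFun hwsum i
        simp [Finset.sum_apply, Pi.smul_apply, smul_eq_mul, Set.restrict_apply] at hcf2
        exact hcf2
      simp only [hz, zero_smul, Finset.sum_const_zero]
    · intro haff
      rw [linearIndependent_iff']
      intro s g hsum e he
      have hsum' : ∑ x ∈ s, (g x * cc x) • t (φ (↑x : α)) = 0 := by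
        rw [← hsum]
        refine Finset.sum_congr rfl fun x _ => ?_
        rw [← smul_smul, ← hccv x]
        rfl
      have hg0 : ∑ x ∈ s, (g x * cc x) = 0 := by
        have hl := congrArg lam hsum'
        rw [map_sum, map_zero] at hl
        simpa [map_smul, hlamt, smul_eq_mul, mul_one] using hl
      have hcomb2 := hcomb I s (fun x => g x * cc x)
      rw [hsum', hg0, zero_smul, zero_add] at hcomb2
      have hzero : ∑ i, (∑ x ∈ s, (g x * cc x) * φ (↑x : α) i) • v (b i) = 0 := hcomb2.symm
      have hco : ∀ i, (∑ x ∈ s, (g x * cc x) * φ (↑x : α) i) = 0 :=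
        fun i => linearIndependent_iff'.mp hbli Finset.univ _ hzero i (Finset.mem_univ i)
      have hwsum : ∑ x ∈ s, (g x * cc x) • (I.restrict φ) x = 0 := by
        funext i
        rw [Finset.sum_apply]
        simp [Pi.smul_apply, smul_eq_mul, Set.restrict_apply]
        exact hco i
      have hge := affineIndependent_iff.mp haff s (fun x => g x * cc x) hg0 hwsum e he
      exact (mul_eq_zero.mp hge).resolve_right (hcc0 e)
  constructor
  · have e : ↥(M.closure (insert f (Set.range b)) \ C) ≃ (Fin (k-1) → ZMod p) :=
      Equiv.ofBijective (fun x => φ ↑x)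
        ⟨fun x y h => Subtype.ext (hφinj x.2 y.2 h),
         fun w => by
          obtain ⟨g, hg, hgw⟩ := hφsurj w
          exact ⟨⟨g, hg⟩, hgw⟩⟩
    calc (M.closure (insert f (Set.range b)) \ C).encard
        = ENat.card ↥(M.closure (insert f (Set.range b)) \ C) := rfl
      _ = ENat.card (Fin (k-1) → ZMod p) := ENat.card_congr e
      _ = ((Fintype.card (Fin (k-1) → ZMod p) : ℕ) : ℕ∞) := ENat.card_eq_coe_fintype_card
      _ = ((p ^ (k-1) : ℕ) : ℕ∞) := by
          rw [Fintype.card_fun, ZMod.card, Fintype.card_fin]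
  · refine ⟨φ, ?_, ?_, ?_⟩
    · intro I hI
      rw [Matroid.restrict_ground_eq] at hI
      rw [Matroid.restrict_indep_iff]
      constructor
      · rintro ⟨h1, -⟩
        exact (hmain I hI).mp h1
      · intro h
        exact ⟨(hmain I hI).mpr h, hI⟩
    · rw [Matroid.restrict_ground_eq]
      exact hφinj
    · intro w
      obtain ⟨g, hg, hgw⟩ := hφsurj w
      refine ⟨g, ?_, hgw⟩
      rw [Matroid.restrict_ground_eq]
      exact hg
end
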